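/- arXiv:2110.01138 — 10 statements merged into one kernel-verified Lean document; each statement's English description precedes it below -/
import Mathlib

section
/- Let X be a T₀ topological space and let x₁, x₂ ∈ X with x₁ < x₂ in the specialization order. Then the two-point set A = {x₁, x₂} is b-closed in X, and the subspace A of X is homeomorphic to the Sierpiński space Σ2. -/
open TopologicalSpace

/-- The b-topology associated with a topological space `(X, t)`: the topology with base
`{U ∩ cl({x}) : x ∈ U, U open}`. -/
def bTop (X : Type) (t : TopologicalSpace X) : TopologicalSpace X :=
  TopologicalSpace.generateFrom
    {s | ∃ (U : Set X) (x : X), @IsOpen X t U ∧ x ∈ U ∧ s = U ∩ @closure X t {x}}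

/-- The specialization order of `(X, t)`: `x ≤ y` iff `x ∈ cl({y})`. -/
def specLE {X : Type} (t : TopologicalSpace X) (x y : X) : Prop :=
  x ∈ @closure X t {y}

/-- The subspace topology on a subset. -/
def subTop {X : Type} (t : TopologicalSpace X) (A : Set X) : TopologicalSpace A :=
  TopologicalSpace.induced Subtype.val t

/-- A class of topological spaces, viewed as the object class of a full subcategory of Top. -/
abbrev SpaceClass : Type 1 := (X : Type) → TopologicalSpace X → Prop

/-- All members of `K` are T₀ (i.e. `K` is a subcategory of `Top₀`). -/
def AllT0 (K : SpaceClass) : Prop := ∀ X t, K X t → @T0Space X t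

/-- `K` is closed under homeomorphisms. -/
def ClosedUnderHomeo (K : SpaceClass) : Prop :=
  ∀ (X Y : Type) (tX : TopologicalSpace X) (tY : TopologicalSpace Y),
    K X tX → Nonempty (@Homeomorph X Y tX tY) → K Y tY

/-- `K ⊄ Top₁`: `K` contains a space that is not T₁. -/
def NotSubT1 (K : SpaceClass) : Prop := ∃ X t, K X t ∧ ¬ @T1Space X t

/-- `μ : X → Xk` is a K-reflection for `X`: `Xk ∈ K`, `μ` is continuous and every continuous map
from `X` to a member of `K` factors uniquely (continuously) through `μ`. -/
def IsReflection (K : SpaceClass) {X Xk : Type} (tX : TopologicalSpace X)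
    (tk : TopologicalSpace Xk) (μ : X → Xk) : Prop :=
  K Xk tk ∧ @Continuous X Xk tX tk μ ∧
    ∀ (Z : Type) (tZ : TopologicalSpace Z), K Z tZ →
      ∀ f : X → Z, @Continuous X Z tX tZ f →
        ∃! g : Xk → Z, @Continuous Xk Z tk tZ g ∧ g ∘ μ = f

/-- `K` is reflective in `Top₀`: every T₀ space admits a K-reflection. -/
def IsReflective (K : SpaceClass) : Prop :=
  ∀ (X : Type) (tX : TopologicalSpace X), @T0Space X tX →
    ∃ (Xk : Type) (tk : TopologicalSpace Xk) (μ : X → Xk), IsReflection K tX tk μ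

/-- `K` is b-closed-hereditary. -/
def BClosedHereditary (K : SpaceClass) : Prop :=
  ∀ (X : Type) (tX : TopologicalSpace X) (A : Set X),
    K X tX → @IsClosed X (bTop X tX) A → K A (subTop tX A)

/-- `K` is productive. -/
def Productive (K : SpaceClass) : Prop :=
  ∀ (I : Type) (X : I → Type) (t : ∀ i, TopologicalSpace (X i)),
    (∀ i, K (X i) (t i)) → K (∀ i, X i) (@Pi.topologicalSpace I X t)

/-- `K` has equalizers. -/
def HasEqualizers (K : SpaceClass) : Prop :=
  ∀ (X Y : Type) (tX : TopologicalSpace X) (tY : TopologicalSpace Y),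
    K X tX → K Y tY → ∀ f g : X → Y, @Continuous X Y tX tY f → @Continuous X Y tX tY g →
      K {x | f x = g x} (subTop tX {x | f x = g x})

/-- `(X, t)` is sober: T₀ and every irreducible closed set is the closure of a point. -/
def Sober (X : Type) (t : TopologicalSpace X) : Prop := @T0Space X t ∧ @QuasiSober X t

/-- If `x₁ < x₂` in the specialization order of a T₀ space `X`, then `{x₁, x₂}` is
b-closed in `X` and, as a subspace of `X`, is homeomorphic to the Sierpiński space. -/
theorem statement0 {X : Type} [tX : TopologicalSpace X] [T0Space X] (x₁ x₂ : X)
    (hle : specLE tX x₁ x₂) (hne : x₁ ≠ x₂) :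
    @IsClosed X (bTop X tX) {x₁, x₂} ∧
      Nonempty (({x₁, x₂} : Set X) ≃ₜ Prop) := by
  classical
  have hle' : x₁ ∈ closure ({x₂} : Set X) := hle
  -- x₂ is not in the closure of {x₁}
  have hnc : x₂ ∉ closure ({x₁} : Set X) := by
    intro h
    exact hne (((specializes_iff_mem_closure.2 hle').antisymm
      (specializes_iff_mem_closure.2 h)).eq).symm
  -- every open set containing x₁ contains x₂
  have hmem : ∀ U : Set X, IsOpen U → x₁ ∈ U → x₂ ∈ U := by
    intro U hU hx₁
    rcases mem_closure_iff.1 hle' U hU hx₁ with ⟨z, hz, hz'⟩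
    rwa [Set.mem_singleton_iff.1 hz'] at hz
  have hx₁A : x₁ ∈ ({x₁, x₂} : Set X) := Or.inl rfl
  have hx₂A : x₂ ∈ ({x₁, x₂} : Set X) := Or.inr rfl
  constructor
  · -- b-closedness
    -- for each y outside {x₁,x₂}, build a basic b-open set containing y avoiding x₁,x₂
    have key : ∀ y ∈ ({x₁, x₂} : Set X)ᶜ, ∃ B : Set X,
        (∃ (U : Set X) (x : X), IsOpen U ∧ x ∈ U ∧ B = U ∩ closure {x}) ∧
        y ∈ B ∧ B ⊆ ({x₁, x₂} : Set X)ᶜ := by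
      intro y hy
      simp only [Set.mem_compl_iff, Set.mem_insert_iff, Set.mem_singleton_iff, not_or] at hy
      obtain ⟨hy1, hy2⟩ := hy
      -- choose an open nbhd of y avoiding xᵢ when xᵢ ∈ cl {y}
      have pick : ∀ z : X, z ≠ y → ∃ U : Set X, IsOpen U ∧ y ∈ U ∧
          (z ∈ closure ({y} : Set X) → z ∉ U) := by
        intro z hz
        by_cases hc : z ∈ closure ({y} : Set X)
        · -- then y ∉ closure {z} (T₀), so pick the complement of closure {z}
          have hyz : y ∉ closure ({z} : Set X) := by
            intro h
            exact hz (((specializes_iff_mem_closure.2 hc).antisymm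
              (specializes_iff_mem_closure.2 h)).eq).symm
          refine ⟨(closure ({z} : Set X))ᶜ, isClosed_closure.isOpen_compl, hyz, ?_⟩
          intro _ hzin
          exact hzin (subset_closure rfl)
        · exact ⟨Set.univ, isOpen_univ, trivial, fun h => absurd h hc⟩
      obtain ⟨U₁, hU₁, hyU₁, h₁⟩ := pick x₁ (Ne.symm hy1)
      obtain ⟨U₂, hU₂, hyU₂, h₂⟩ := pick x₂ (Ne.symm hy2)
      refine ⟨(U₁ ∩ U₂) ∩ closure {y}, ⟨U₁ ∩ U₂, y, hU₁.inter hU₂, ⟨hyU₁, hyU₂⟩, rfl⟩,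
        ⟨⟨hyU₁, hyU₂⟩, subset_closure rfl⟩, ?_⟩
      rintro z ⟨⟨hz1, hz2⟩, hzc⟩
      simp only [Set.mem_compl_iff, Set.mem_insert_iff, Set.mem_singleton_iff, not_or]
      exact ⟨fun h => (h₁ (h ▸ hzc)) (h ▸ hz1), fun h => (h₂ (h ▸ hzc)) (h ▸ hz2)⟩
    -- the complement is the union of these basic sets
    choose B hBbasic hBmem hBsub using key
    have hEq2 : ({x₁, x₂} : Set X)ᶜ = ⋃₀ {s : Set X | ∃ y h, s = B y h} := by
      apply Set.Subset.antisymm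
      · intro y hy
        exact ⟨B y hy, ⟨y, hy, rfl⟩, hBmem y hy⟩
      · rintro z ⟨s, ⟨y, h, rfl⟩, hz⟩
        exact hBsub y h hz
    have hOpenU : @IsOpen X (bTop X tX) (⋃₀ {s : Set X | ∃ y h, s = B y h}) :=
      TopologicalSpace.GenerateOpen.sUnion _
        (by rintro s ⟨y, h, rfl⟩; exact TopologicalSpace.GenerateOpen.basic _ (hBbasic y h))
    have hOpenC : @IsOpen X (bTop X tX) ({x₁, x₂} : Set X)ᶜ := by
      rw [hEq2]; exact hOpenU
    exact @IsClosed.mk X (bTop X tX) _ hOpenC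
  · -- the subspace {x₁, x₂} is homeomorphic to Sierpiński space
    -- the equivalence
    let e : ({x₁, x₂} : Set X) ≃ Prop :=
      { toFun := fun a => (a : X) = x₂
        invFun := fun p => if p then ⟨x₂, hx₂A⟩ else ⟨x₁, hx₁A⟩
        left_inv := by
          rintro ⟨a, ha⟩
          dsimp only
          rcases ha with h | h
          · rw [if_neg (show ¬ a = x₂ from h ▸ hne)]
            exact Subtype.ext h.symm
          · rw [Set.mem_singleton_iff] at h
            rw [if_pos h]
            exact Subtype.ext h.symm
        right_inv := by
          intro p
          by_cases hp : p
          · simp only [if_pos hp]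
            exact (eq_true hp).symm
          · simp only [if_neg hp]
            exact (eq_false hne).trans (eq_false hp).symm }
    -- continuity of e
    have hcont : Continuous e := by
      rw [continuous_Prop]
      have hset : {a : ({x₁, x₂} : Set X) | e a}
          = Subtype.val ⁻¹' (closure ({x₁} : Set X))ᶜ := by
        ext a
        constructor
        · intro h
          have h' : (a : X) = x₂ := h
          show (a : X) ∉ closure ({x₁} : Set X)
          rw [h']
          exact hnc
        · intro h
          have h' : (a : X) ∉ closure ({x₁} : Set X) := h
          rcases a.2 with h2 | h2
          · rw [h2] at h'
            exact absurd (subset_closure (Set.mem_singleton x₁)) h'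
          · exact h2
      rw [hset]
      exact isClosed_closure.isOpen_compl.preimage continuous_subtype_val
    -- e is an open map
    have hopen : IsOpenMap e := by
      intro V hV
      rcases isOpen_induced_iff.1 hV with ⟨U, hU, rfl⟩
      by_cases h2 : x₂ ∈ U
      · by_cases h1 : x₁ ∈ U
        · -- image contains both True and False, hence is univ
          have himg : e '' (Subtype.val ⁻¹' U) = Set.univ := by
            apply Set.eq_univ_of_forall
            intro p
            by_cases hp : p
            · exact ⟨⟨x₂, hx₂A⟩, h2, (eq_true rfl).trans (eq_true hp).symm⟩
            · exact ⟨⟨x₁, hx₁A⟩, h1, (eq_false hne).trans (eq_false hp).symm⟩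
          rw [himg]; exact isOpen_univ
        · -- image is {True}
          have himg : e '' (Subtype.val ⁻¹' U) = {True} := by
            ext p
            simp only [Set.mem_image, Set.mem_preimage, Set.mem_singleton_iff]
            constructor
            · rintro ⟨⟨a, ha⟩, haU, rfl⟩
              rcases ha with h' | h'
              · exact absurd haU (h' ▸ h1)
              · rw [Set.mem_singleton_iff] at h'
                exact eq_true h'
            · rintro rfl
              exact ⟨⟨x₂, hx₂A⟩, h2, eq_true rfl⟩
          rw [himg]; exact isOpen_singleton_true
      · -- x₂ ∉ U forces x₁ ∉ U (specialization), so image is empty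
        have h1 : x₁ ∉ U := fun h => h2 (hmem U hU h)
        have himg : e '' (Subtype.val ⁻¹' U) = ∅ := by
          apply Set.eq_empty_iff_forall_notMem.2
          rintro p ⟨⟨a, ha⟩, haU, rfl⟩
          rcases ha with h' | h'
          · exact (h' ▸ h1) haU
          · rw [Set.mem_singleton_iff] at h'
            exact (h' ▸ h2) haU
        rw [himg]; exact isOpen_empty
    exact ⟨Equiv.toHomeomorphOfContinuousOpen e hcont hopen⟩
end

section
/- Let X, Y, Z be T₀ topological spaces, let k : X → Y be a continuous map such that k(X) is b-dense in Y, and let f : X → Z be a continuous map. Then there exists at most one continuous map g : Y → Z such that g ∘ k = f. -/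
open TopologicalSpace

/-- if `k : X → Y` is continuous with b-dense range and `f : X → Z` is continuous,
then there is at most one continuous `g : Y → Z` with `g ∘ k = f`. -/
theorem statement1 {X Y Z : Type}
    [tX : TopologicalSpace X] [tY : TopologicalSpace Y] [tZ : TopologicalSpace Z]
    [T0Space X] [T0Space Y] [T0Space Z]
    (k : X → Y) (hk : Continuous k) (hdense : @Dense Y (bTop Y tY) (Set.range k))
    (f : X → Z) (hf : Continuous f)
    (g₁ g₂ : Y → Z) (hg₁ : Continuous g₁) (hg₂ : Continuous g₂)
    (hfk₁ : g₁ ∘ k = f) (hfk₂ : g₂ ∘ k = f) :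
    g₁ = g₂ := by
  -- key: the disagreement set is open in the b-topology
  have claim : ∀ y, g₁ y ≠ g₂ y → ∃ B : Set Y,
      @IsOpen Y (bTop Y tY) B ∧ y ∈ B ∧ ∀ z ∈ B, g₁ z ≠ g₂ z := by
    intro y hne
    obtain ⟨V, hV, hxor⟩ := exists_isOpen_xor'_mem hne
    rcases hxor with ⟨h1, h2⟩ | ⟨h2, h1⟩
    · refine ⟨g₁ ⁻¹' V ∩ closure {y}, ?_, ⟨h1, subset_closure rfl⟩, ?_⟩
      · exact TopologicalSpace.isOpen_generateFrom_of_mem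
          ⟨g₁ ⁻¹' V, y, hV.preimage hg₁, h1, rfl⟩
      · rintro z ⟨hz1, hz2⟩ heq
        have : g₂ z ∈ closure ({g₂ y} : Set Z) :=
          map_mem_closure hg₂ hz2 (by simp)
        have hzV : g₂ z ∈ V := heq ▸ hz1
        obtain ⟨w, hwV, hw⟩ := mem_closure_iff.mp this V hV hzV
        exact h2 (hw ▸ hwV)
    · refine ⟨g₂ ⁻¹' V ∩ closure {y}, ?_, ⟨h2, subset_closure rfl⟩, ?_⟩
      · exact TopologicalSpace.isOpen_generateFrom_of_mem
          ⟨g₂ ⁻¹' V, y, hV.preimage hg₂, h2, rfl⟩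
      · rintro z ⟨hz1, hz2⟩ heq
        have : g₁ z ∈ closure ({g₁ y} : Set Z) :=
          map_mem_closure hg₁ hz2 (by simp)
        have hzV : g₁ z ∈ V := heq ▸ hz1
        obtain ⟨w, hwV, hw⟩ := mem_closure_iff.mp this V hV hzV
        exact h1 (hw ▸ hwV)
  choose! B hBopen hBmem hBsub using claim
  have hopen : @IsOpen Y (bTop Y tY) {y | g₁ y ≠ g₂ y} := by
    have heq : {y | g₁ y ≠ g₂ y} = ⋃ y ∈ {y | g₁ y ≠ g₂ y}, B y := by
      apply Set.Subset.antisymm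
      · intro y hy
        exact Set.mem_biUnion hy (hBmem y hy)
      · intro z hz
        simp only [Set.mem_iUnion] at hz
        obtain ⟨y, hy, hzB⟩ := hz
        exact hBsub y hy z hzB
    rw [heq]
    exact @isOpen_biUnion Y Y (bTop Y tY) _ _ fun y hy => hBopen y hy
  have hclosed : @IsClosed Y (bTop Y tY) {y | g₁ y = g₂ y} := by
    rw [← @isOpen_compl_iff Y _ (bTop Y tY)]
    convert hopen using 1
    rfl
  have hrange : Set.range k ⊆ {y | g₁ y = g₂ y} := by
    rintro _ ⟨x, rfl⟩
    show g₁ (k x) = g₂ (k x)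
    have := congrFun hfk₁ x
    have := congrFun hfk₂ x
    simp_all [Function.comp]
  have : {y | g₁ y = g₂ y} = Set.univ := by
    apply Set.eq_univ_of_univ_subset
    calc Set.univ = @closure Y (bTop Y tY) (Set.range k) := (@Dense.closure_eq Y (bTop Y tY) _ hdense).symm
      _ ⊆ @closure Y (bTop Y tY) {y | g₁ y = g₂ y} := @closure_mono Y (bTop Y tY) _ _ hrange
      _ = {y | g₁ y = g₂ y} := @IsClosed.closure_eq Y (bTop Y tY) _ hclosed
  funext y
  exact Set.eq_univ_iff_forall.mp this y
end

section
/- Let X, Y, Z be T₀ topological spaces, let k : X → Y be a continuous map such that k(X) is b-dense in Y, and let f : X → Z be a continuous map. If g : Y → Z is a continuous map satisfying g ∘ k = f, then g(Y) is contained in the b-closure of f(X) in Z (the closure of f(X) in the b-topology of Z). -/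
open TopologicalSpace

lemma bTop_continuous {Y Z : Type} [tY : TopologicalSpace Y] [tZ : TopologicalSpace Z]
    (g : Y → Z) (hg : Continuous g) :
    @Continuous Y Z (bTop Y tY) (bTop Z tZ) g := by
  rw [show bTop Z tZ = TopologicalSpace.generateFrom
    {s | ∃ (U : Set Z) (x : Z), IsOpen U ∧ x ∈ U ∧ s = U ∩ closure {x}} from rfl,
    continuous_generateFrom_iff]
  rintro s ⟨U, x, hU, hxU, rfl⟩
  rw [@isOpen_iff_mem_nhds Y (bTop Y tY) _]
  intro y hy
  have hgy : g y ∈ U ∩ closure {x} := hy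
  have hb : @IsOpen Y (bTop Y tY) (g ⁻¹' U ∩ closure {y}) :=
    TopologicalSpace.isOpen_generateFrom_of_mem ⟨g ⁻¹' U, y, hU.preimage hg, hgy.1, rfl⟩
  refine Filter.mem_of_superset (@IsOpen.mem_nhds Y (bTop Y tY) y _ hb
    ⟨hgy.1, subset_closure rfl⟩) ?_
  rintro y' ⟨hy'U, hy'c⟩
  refine ⟨hy'U, ?_⟩
  have h1 : closure {y} ⊆ g ⁻¹' closure {g y} :=
    closure_minimal (Set.singleton_subset_iff.2 (subset_closure rfl))
      ((isClosed_closure).preimage hg)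
  have h2 : g y' ∈ closure {g y} := h1 hy'c
  exact closure_minimal (Set.singleton_subset_iff.2 hgy.2) isClosed_closure h2

/-- if `k : X → Y` is continuous with b-dense range, `f : X → Z` is continuous and
`g : Y → Z` is continuous with `g ∘ k = f`, then `g(Y)` is contained in the b-closure of `f(X)`
in `Z`. -/
theorem statement2 {X Y Z : Type}
    [tX : TopologicalSpace X] [tY : TopologicalSpace Y] [tZ : TopologicalSpace Z]
    [T0Space X] [T0Space Y] [T0Space Z]
    (k : X → Y) (hk : Continuous k) (hdense : @Dense Y (bTop Y tY) (Set.range k))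
    (f : X → Z) (hf : Continuous f)
    (g : Y → Z) (hg : Continuous g) (hfk : g ∘ k = f) :
    Set.range g ⊆ @closure Z (bTop Z tZ) (Set.range f) := by
  rintro _ ⟨y, rfl⟩
  have hgc := bTop_continuous g hg
  have h1 : y ∈ @closure Y (bTop Y tY) (Set.range k) := hdense y
  have h2 : Set.range k ⊆ g ⁻¹' Set.range f := by
    rintro _ ⟨x, rfl⟩
    exact ⟨x, (congrFun hfk x).symm⟩
  have h3 : @closure Y (bTop Y tY) (Set.range k) ⊆ g ⁻¹' (@closure Z (bTop Z tZ) (Set.range f)) :=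
    @closure_minimal Y (bTop Y tY) _ _ (h2.trans (Set.preimage_mono (@subset_closure Z (bTop Z tZ) _)))
      (@IsClosed.preimage Y Z (bTop Y tY) (bTop Z tZ) g hgc _ (@isClosed_closure Z (bTop Z tZ) _))
  exact h3 h1
end

section
/- Let K be a reflective full subcategory of Top₀ closed under homeomorphisms such that K ⊄ Top₁. Then K is b-closed-hereditary: if X ∈ K and A is a b-closed subset of X, then the subspace A belongs to K. -/
open TopologicalSpace

open Classical in
/-- Characteristic-like map into a space with two specialization-comparable points. -/
noncomputable def chiMap {Z S : Type} (V : Set Z) (b a : S) : Z → S :=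
  fun z => if z ∈ V then b else a

lemma chiMap_continuous {Z S : Type} [TopologicalSpace Z] [TopologicalSpace S]
    {V : Set Z} (hV : IsOpen V) {a b : S} (hab : a ∈ closure ({b} : Set S)) :
    Continuous (chiMap V b a) := by
  rw [continuous_def]
  intro O hO
  by_cases ha : a ∈ O
  · have hb : b ∈ O := by
      rcases (mem_closure_iff.mp hab) O hO ha with ⟨c, hcO, hcb⟩
      rcases hcb with rfl; exact hcO
    have : chiMap V b a ⁻¹' O = Set.univ := by
      ext z; simp only [Set.mem_preimage, Set.mem_univ, iff_true, chiMap]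
      split <;> assumption
    rw [this]; exact isOpen_univ
  · by_cases hb : b ∈ O
    · have : chiMap V b a ⁻¹' O = V := by
        ext z; simp only [Set.mem_preimage, chiMap]
        split <;> simp_all
      rw [this]; exact hV
    · have : chiMap V b a ⁻¹' O = ∅ := by
        ext z; simp only [Set.mem_preimage, Set.mem_empty_iff_false, iff_false, chiMap]
        split <;> assumption
      rw [this]; exact isOpen_empty

lemma chiMap_inj {Z S : Type} {V₁ V₂ : Set Z} {a b : S} (hab : a ≠ b)
    (h : chiMap V₁ b a = chiMap V₂ b a) : V₁ = V₂ := by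
  ext z
  have hz := congrFun h z
  unfold chiMap at hz
  constructor <;> intro hmem
  · by_contra h2
    rw [if_pos hmem, if_neg h2] at hz; exact hab hz.symm
  · by_contra h1
    rw [if_neg h1, if_pos hmem] at hz; exact hab hz

/-- A point of a `bTop`-open set has a basic neighborhood of the form `U ∩ cl {q}`. -/
lemma bOpen_basic {X : Type} [t : TopologicalSpace X] {s : Set X}
    (hs : TopologicalSpace.GenerateOpen
      {s | ∃ (U : Set X) (x : X), IsOpen U ∧ x ∈ U ∧ s = U ∩ closure {x}} s) :
    ∀ q ∈ s, ∃ U : Set X, IsOpen U ∧ q ∈ U ∧ U ∩ closure {q} ⊆ s := by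
  induction hs with
  | basic s hsB =>
      rintro q hq
      obtain ⟨U, x, hU, hxU, rfl⟩ := hsB
      refine ⟨U, hU, hq.1, ?_⟩
      intro z hz
      exact ⟨hz.1, closure_minimal (Set.singleton_subset_iff.mpr hq.2) isClosed_closure hz.2⟩
  | univ => intro q _; exact ⟨Set.univ, isOpen_univ, trivial, fun _ _ => trivial⟩
  | inter s₁ s₂ _ _ ih₁ ih₂ =>
      rintro q ⟨hq₁, hq₂⟩
      obtain ⟨U₁, hU₁, hqU₁, hsub₁⟩ := ih₁ q hq₁
      obtain ⟨U₂, hU₂, hqU₂, hsub₂⟩ := ih₂ q hq₂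
      exact ⟨U₁ ∩ U₂, hU₁.inter hU₂, ⟨hqU₁, hqU₂⟩,
        fun z hz => ⟨hsub₁ ⟨hz.1.1, hz.2⟩, hsub₂ ⟨hz.1.2, hz.2⟩⟩⟩
  | sUnion S _ ih =>
      rintro q ⟨s, hsS, hqs⟩
      obtain ⟨U, hU, hqU, hsub⟩ := ih s hsS q hqs
      exact ⟨U, hU, hqU, fun z hz => ⟨s, hsS, hsub hz⟩⟩

/-- a reflective full subcategory of Top₀ closed under homeomorphisms containing a
non-T₁ space is b-closed-hereditary. -/
theorem statement3 (K : SpaceClass) (hT0 : AllT0 K) (hHomeo : ClosedUnderHomeo K)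
    (hRefl : IsReflective K) (hNotT1 : NotSubT1 K) :
    BClosedHereditary K := by
  intro X tX A hKX hAb
  letI := tX
  haveI hXT0 : T0Space X := hT0 X tX hKX
  letI tA : TopologicalSpace A := subTop tX A
  haveI hAT0 : T0Space A := by
    have hemb : Topology.IsEmbedding (Subtype.val : A → X) :=
      ⟨⟨rfl⟩, Subtype.val_injective⟩
    exact hemb.t0Space
  -- the reflection of A
  obtain ⟨Ak, tk, μ, hKAk, hμc, hfact⟩ := hRefl A tA hAT0
  letI := tk
  haveI hAkT0 : T0Space Ak := hT0 Ak tk hKAk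
  -- the inclusion factors through the reflection
  have hval : @Continuous A X tA tX (Subtype.val) := continuous_induced_dom
  obtain ⟨g, ⟨hgc, hgμ⟩, _⟩ := hfact X tX hKX Subtype.val hval
  -- a non-T₁ member of K gives two distinct comparable points
  obtain ⟨S, tS, hKS, hSnT1⟩ := hNotT1
  letI := tS
  obtain ⟨b, hb⟩ : ∃ b : S, ¬ IsClosed ({b} : Set S) := by
    by_contra h
    push_neg at h
    exact hSnT1 ⟨h⟩
  obtain ⟨a, hacl, hab⟩ : ∃ a : S, a ∈ closure ({b} : Set S) ∧ a ≠ b := by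
    by_contra h
    push_neg at h
    refine hb ?_
    have : closure ({b} : Set S) = {b} := by
      apply Set.Subset.antisymm
      · intro c hc
        rcases eq_or_ne c b with rfl | hcb
        · rfl
        · exact absurd hcb (by simpa using h c hc)
      · exact subset_closure
    rw [← this]; exact isClosed_closure
  -- key uniqueness tool: opens in Ak with equal μ-preimage are equal
  have huniq : ∀ V₁ V₂ : Set Ak, IsOpen V₁ → IsOpen V₂ → μ ⁻¹' V₁ = μ ⁻¹' V₂ → V₁ = V₂ := by
    intro V₁ V₂ hV₁ hV₂ hpre
    have hc₁ : Continuous (chiMap V₁ b a) := chiMap_continuous hV₁ hacl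
    have hc₂ : Continuous (chiMap V₂ b a) := chiMap_continuous hV₂ hacl
    have hcomp : chiMap V₁ b a ∘ μ = chiMap V₂ b a ∘ μ := by
      funext x
      simp only [Function.comp_apply, chiMap]
      have : μ x ∈ V₁ ↔ μ x ∈ V₂ := by
        constructor <;> intro h
        · rw [← Set.mem_preimage, hpre] at h; exact h
        · rw [← Set.mem_preimage, ← hpre] at h; exact h
      split <;> split <;> simp_all
    obtain ⟨h, -, hun⟩ := hfact S tS hKS (chiMap V₁ b a ∘ μ) (hc₁.comp hμc)
    have e₁ := hun (chiMap V₁ b a) ⟨hc₁, rfl⟩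
    have e₂ := hun (chiMap V₂ b a) ⟨hc₂, hcomp.symm⟩
    exact chiMap_inj hab (e₁.trans e₂.symm)
  -- every open of Ak is of the form g ⁻¹' U'
  have hopens : ∀ W : Set Ak, IsOpen W → ∃ U' : Set X, IsOpen U' ∧ W = g ⁻¹' U' := by
    intro W hW
    have : @IsOpen A tA (μ ⁻¹' W) := hW.preimage hμc
    obtain ⟨U', hU', hval⟩ := isOpen_induced_iff.mp this
    refine ⟨U', hU', (huniq W (g ⁻¹' U') hW (hU'.preimage hgc) ?_).symm ▸ rfl⟩
    rw [← Set.preimage_comp, hgμ, hval]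
  -- μ is surjective
  have hsurj : Function.Surjective μ := by
    intro p
    set q : X := g p with hq
    -- q ∈ A, using b-closedness of A
    have hqA : q ∈ A := by
      by_contra hqA
      have hAc : TopologicalSpace.GenerateOpen
          {s | ∃ (U : Set X) (x : X), IsOpen U ∧ x ∈ U ∧ s = U ∩ closure {x}} Aᶜ := hAb.1
      obtain ⟨U, hU, hqU, hsub⟩ := bOpen_basic hAc q hqA
      set V₁ : Set Ak := g ⁻¹' U with hV₁def
      set V₂ : Set Ak := V₁ ∩ (closure ({p} : Set Ak))ᶜ with hV₂def
      have hV₁ : IsOpen V₁ := hU.preimage hgc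
      have hV₂ : IsOpen V₂ := hV₁.inter isClosed_closure.isOpen_compl
      have hpre : μ ⁻¹' V₁ = μ ⁻¹' V₂ := by
        apply Set.Subset.antisymm
        · intro x hx
          refine ⟨hx, ?_⟩
          intro hxcl
          have hgx : g (μ x) ∈ closure ({g p} : Set X) := by
            have : closure ({p} : Set Ak) ⊆ g ⁻¹' closure ({g p} : Set X) :=
              closure_minimal (by
                intro z hz; rcases hz with rfl
                exact subset_closure rfl) (isClosed_closure.preimage hgc)
            exact this hxcl
          have hxval : g (μ x) = (x : X) := congrFun hgμ x
          have : (x : X) ∈ U ∩ closure ({q} : Set X) := by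
            rw [← hxval]
            exact ⟨hx, hgx⟩
          exact (hsub this) x.2
        · intro x hx; exact hx.1
      have : V₁ = V₂ := huniq V₁ V₂ hV₁ hV₂ hpre
      have hpV₁ : p ∈ V₁ := hqU
      rw [this] at hpV₁
      exact hpV₁.2 (subset_closure rfl)
    -- p = μ ⟨q, hqA⟩ by T₀
    refine ⟨⟨q, hqA⟩, ?_⟩
    have hins : Inseparable (μ ⟨q, hqA⟩) p := by
      rw [inseparable_iff_forall_isOpen]
      intro W hW
      obtain ⟨U', hU', rfl⟩ := hopens W hW
      have : g (μ ⟨q, hqA⟩) = q := congrFun hgμ ⟨q, hqA⟩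
      simp only [Set.mem_preimage, this, ← hq]
    exact hins.eq
  -- μ is injective
  have hinj : Function.Injective μ := by
    intro x y hxy
    have hx : g (μ x) = (x : X) := congrFun hgμ x
    have hy : g (μ y) = (y : X) := congrFun hgμ y
    apply Subtype.ext
    rw [← hx, ← hy, hxy]
  -- μ is inducing
  have hind' : Topology.IsInducing μ := by
    refine ⟨le_antisymm (continuous_iff_le_induced.mp hμc) ?_⟩
    rw [TopologicalSpace.le_def]
    intro s hs
    obtain ⟨U', hU', rfl⟩ := hs
    exact ⟨g ⁻¹' U', hU'.preimage hgc, by rw [← Set.preimage_comp, hgμ]⟩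
  -- assemble the homeomorphism
  let e : A ≃ Ak := Equiv.ofBijective μ ⟨hinj, hsurj⟩
  have he : Topology.IsInducing (⇑e) := hind'
  have homeo : A ≃ₜ Ak := Equiv.toHomeomorphOfIsInducing e he
  exact hHomeo Ak A tk tA hKAk ⟨homeo.symm⟩
end

section
/- Let K be a reflective full subcategory of Top₀ closed under homeomorphisms such that K ⊄ Top₁. Then the Sierpiński space Σ2 belongs to K, and consequently for every set M the product space (Σ2)^M belongs to K. -/
open TopologicalSpace

/-- If a space retracts (continuously, splitting the reflection) onto its K-reflection,
then it belongs to K. -/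
lemma mem_of_retract (K : SpaceClass) (hHomeo : ClosedUnderHomeo K)
    {X S : Type} (tX : TopologicalSpace X) (tS : TopologicalSpace S) (μ : X → S)
    (hrefl : IsReflection K tX tS μ) (h : S → X) (hc : @Continuous S X tS tX h)
    (hhμ : h ∘ μ = id) : K X tX := by
  obtain ⟨hKS, hμc, huniq⟩ := hrefl
  obtain ⟨g, -, hg⟩ := huniq S tS hKS μ hμc
  have h1 : μ ∘ h = id := by
    have e1 : μ ∘ h = g := hg (μ ∘ h) ⟨@Continuous.comp S X S tS tX tS h μ hμc hc, by
      rw [Function.comp_assoc, hhμ]; rfl⟩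
    have e2 : (id : S → S) = g := hg id ⟨@continuous_id S tS, rfl⟩
    rw [e1, ← e2]
  have homeo : @Homeomorph S X tS tX :=
    { toFun := h
      invFun := μ
      left_inv := fun s => congrFun h1 s
      right_inv := fun x => congrFun hhμ x
      continuous_toFun := hc
      continuous_invFun := hμc }
  exact hHomeo S X tS tX hKS ⟨homeo⟩

lemma true_mem_of_false_mem {U : Set Prop} (hU : IsOpen U) (hF : False ∈ U) : True ∈ U := by
  have hmem : U ∈ nhds False := hU.mem_nhds hF
  rw [nhds_false] at hmem
  have : U = Set.univ := by simpa [Filter.mem_top] using hmem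
  rw [this]; trivial

/-- a reflective full subcategory of Top₀ closed under homeomorphisms containing a
non-T₁ space contains the Sierpiński space, and all of its powers `(Σ2)^M`. -/
theorem statement4 (K : SpaceClass) (hT0 : AllT0 K) (hHomeo : ClosedUnderHomeo K)
    (hRefl : IsReflective K) (hNotT1 : NotSubT1 K) :
    K Prop sierpinskiSpace ∧
      ∀ M : Type, K (M → Prop) (Pi.topologicalSpace (t₂ := fun _ => sierpinskiSpace)) := by
  classical
  -- a non-T₁ member of K gives points a ≠ b with a ∈ closure {b}
  obtain ⟨Y, tY, hKY, hY⟩ := hNotT1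
  rw [@t1Space_iff_exists_open Y tY, Pairwise] at hY
  push_neg at hY
  obtain ⟨b, a, hab, ha⟩ := hY
  -- the map f : Prop → Y, f p = if p then b else a, is continuous and f True ≠ f False
  set f : Prop → Y := fun p => if p then a else b with hfdef
  have haU : ∀ U : Set Y, @IsOpen Y tY U → b ∈ U → a ∈ U := fun U hU hbU => ha U hU hbU
  have hf : @Continuous Prop Y sierpinskiSpace tY f := by
    rw [@continuous_def Prop Y sierpinskiSpace tY]
    intro U hU
    by_cases haa : a ∈ U
    · by_cases hb : b ∈ U
      · have : f ⁻¹' U = Set.univ := by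
          ext p; simp only [Set.mem_univ, iff_true, Set.mem_preimage, hfdef]
          by_cases hp : p <;> simp [hp, hb, haa]
        rw [this]; exact isOpen_univ
      · have : f ⁻¹' U = {p | p} := by
          ext p; simp only [Set.mem_preimage, Set.mem_setOf_eq, hfdef]
          by_cases hp : p <;> simp [hp, hb, haa]
        rw [this]
        exact continuous_Prop.mp continuous_id
    · have hb : b ∉ U := fun h => haa (haU U hU h)
      have : f ⁻¹' U = ∅ := by
        ext p
        simp only [Set.mem_preimage, Set.mem_empty_iff_false, iff_false, hfdef]
        by_cases hp : p <;> simp [hp, hb, haa]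
      rw [this]; exact isOpen_empty
  -- take the K-reflection of the Sierpiński space
  have hSier : K Prop sierpinskiSpace := by
    obtain ⟨S, tS, μ, hrefl⟩ := hRefl Prop sierpinskiSpace inferInstance
    obtain ⟨hKS, hμc, huniq⟩ := hrefl
    -- μ True ≠ μ False since f factors through μ and f True ≠ f False
    have hμne : μ True ≠ μ False := by
      obtain ⟨g, ⟨-, hgf⟩, -⟩ := huniq Y tY hKY f hf
      intro h
      have h1 : f True = f False := by
        rw [← hgf]; simp [Function.comp, h]
      simp [hfdef] at h1
      exact hab h1.symm
    -- S is T₀; find an open set containing μ True but not μ False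
    have hT0S : @T0Space S tS := hT0 S tS hKS
    have hnotinsep : ¬ @Inseparable S tS (μ True) (μ False) := by
      intro h
      exact hμne ((@inseparable_iff_eq S tS hT0S (μ True) (μ False)).mp h)
    rw [@inseparable_iff_forall_isOpen S tS] at hnotinsep
    push_neg at hnotinsep
    obtain ⟨V, hV, hsep⟩ := hnotinsep
    have hVT : μ True ∈ V ∧ μ False ∉ V := by
      by_cases hmF : μ False ∈ V
      · exfalso
        have hmT : μ True ∉ V := by tauto
        have hopen : IsOpen (μ ⁻¹' V) := hV.preimage hμc
        have hFT : (False : Prop) ∈ μ ⁻¹' V := hmF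
        exact hmT (true_mem_of_false_mem hopen hFT)
      · exact ⟨by tauto, hmF⟩
    obtain ⟨hVT', hVF⟩ := hVT
    -- the retraction h : S → Prop
    refine mem_of_retract K hHomeo sierpinskiSpace tS μ ⟨hKS, hμc, huniq⟩
      (fun s => s ∈ V) (continuous_Prop.mpr hV) ?_
    funext p
    by_cases hp : p
    · simp only [Function.comp, id, eq_true hp]; exact eq_true hVT'
    · simp only [Function.comp, id, eq_false hp]; exact eq_false hVF
  refine ⟨hSier, fun M => ?_⟩
  letI tP : TopologicalSpace (M → Prop) := Pi.topologicalSpace (t₂ := fun _ => sierpinskiSpace)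
  have hT0P : @T0Space (M → Prop) tP := Pi.instT0Space
  obtain ⟨Q, tQ, ν, hrefl⟩ := hRefl (M → Prop) tP hT0P
  obtain ⟨hKQ, hνc, huniq⟩ := hrefl
  -- factor each projection through the reflection
  choose g hg using fun m : M =>
    (huniq Prop sierpinskiSpace hSier (fun x => x m) (continuous_apply m)).exists
  refine mem_of_retract K hHomeo tP tQ ν ⟨hKQ, hνc, huniq⟩ (fun q m => g m q)
    (continuous_pi fun m => (hg m).1) ?_
  funext x
  funext m
  exact congrFun (hg m).2 x
end

section
/- Let K be a reflective full subcategory of Top₀ closed under homeomorphisms such that K ⊄ Top₁. Then every sober space belongs to K, i.e., Sob ⊆ K. -/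
open TopologicalSpace

-- reflection with continuous section is iso
lemma refl_section {K : (X : Type) → TopologicalSpace X → Prop}
    (hHomeo : ∀ (X Y : Type) (tX : TopologicalSpace X) (tY : TopologicalSpace Y),
      K X tX → Nonempty (@Homeomorph X Y tX tY) → K Y tY)
    {A Ak : Type} {tA : TopologicalSpace A} {tk : TopologicalSpace Ak} {μ : A → Ak}
    (h : IsReflection K tA tk μ) (g : Ak → A) (hg : @Continuous _ _ tk tA g)
    (hgμ : g ∘ μ = id) : K A tA := by
  letI := tA; letI := tk
  obtain ⟨hK, hμc, hu⟩ := h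
  obtain ⟨h', ⟨_, _⟩, huniq⟩ := hu Ak tk hK μ hμc
  have h1 : (id : Ak → Ak) = h' := huniq id ⟨continuous_id, rfl⟩
  have h2 : μ ∘ g = h' := huniq (μ ∘ g) ⟨hμc.comp hg, by
    rw [Function.comp_assoc, hgμ]; rfl⟩
  have hμg : μ ∘ g = id := h2.trans h1.symm
  have e : @Homeomorph A Ak tA tk :=
    { toFun := μ, invFun := g,
      left_inv := fun a => congrFun hgμ a,
      right_inv := fun b => congrFun hμg b,
      continuous_toFun := hμc, continuous_invFun := hg }
  exact hHomeo Ak A tk tA hK ⟨e.symm⟩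

lemma productive' {K : (X : Type) → TopologicalSpace X → Prop}
    (hT0 : ∀ X t, K X t → @T0Space X t)
    (hHomeo : ∀ (X Y : Type) (tX : TopologicalSpace X) (tY : TopologicalSpace Y),
      K X tX → Nonempty (@Homeomorph X Y tX tY) → K Y tY)
    (hRefl : ∀ (X : Type) (tX : TopologicalSpace X), @T0Space X tX →
      ∃ (Xk : Type) (tk : TopologicalSpace Xk) (μ : X → Xk), IsReflection K tX tk μ)
    (I : Type) (X : I → Type) (t : ∀ i, TopologicalSpace (X i))
    (hK : ∀ i, K (X i) (t i)) : K (∀ i, X i) (@Pi.topologicalSpace I X t) := by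
  letI := fun i => t i
  haveI : ∀ i, T0Space (X i) := fun i => hT0 _ _ (hK i)
  obtain ⟨Pk, tk, μ, hrefl⟩ := hRefl (∀ i, X i) _ inferInstance
  letI := tk
  have hfac : ∀ i, ∃ g : Pk → X i, Continuous g ∧ g ∘ μ = fun p => p i := fun i => by
    obtain ⟨g, hg, -⟩ := hrefl.2.2 (X i) (t i) (hK i) (fun p => p i) (continuous_apply i)
    exact ⟨g, hg⟩
  choose g hgc hgμ using hfac
  refine refl_section hHomeo hrefl (fun y i => g i y) (continuous_pi fun i => hgc i) ?_
  funext p; funext i; exact congrFun (hgμ i) p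

lemma hasEq' {K : (X : Type) → TopologicalSpace X → Prop}
    (hT0 : ∀ X t, K X t → @T0Space X t)
    (hHomeo : ∀ (X Y : Type) (tX : TopologicalSpace X) (tY : TopologicalSpace Y),
      K X tX → Nonempty (@Homeomorph X Y tX tY) → K Y tY)
    (hRefl : ∀ (X : Type) (tX : TopologicalSpace X), @T0Space X tX →
      ∃ (Xk : Type) (tk : TopologicalSpace Xk) (μ : X → Xk), IsReflection K tX tk μ)
    (X Y : Type) (tX : TopologicalSpace X) (tY : TopologicalSpace Y)
    (hX : K X tX) (hY : K Y tY) (f g : X → Y)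
    (hf : @Continuous X Y tX tY f) (hg : @Continuous X Y tX tY g) :
    K {x | f x = g x} (TopologicalSpace.induced Subtype.val tX) := by
  letI := tX; letI := tY
  haveI : T0Space X := hT0 _ _ hX
  obtain ⟨Ek, tk, μ, hrefl⟩ := hRefl {x | f x = g x} _ inferInstance
  letI := tk
  obtain ⟨j, ⟨hjc, hjμ⟩, -⟩ := hrefl.2.2 X tX hX Subtype.val continuous_subtype_val
  have key : f ∘ j = g ∘ j := by
    obtain ⟨w, -, huniq⟩ := hrefl.2.2 Y tY hY (f ∘ Subtype.val) (hf.comp continuous_subtype_val)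
    have h1 := huniq (f ∘ j) ⟨hf.comp hjc, by rw [Function.comp_assoc, hjμ]⟩
    have h2 := huniq (g ∘ j) ⟨hg.comp hjc, by
      rw [Function.comp_assoc, hjμ]; funext x; exact x.2.symm⟩
    exact h1.trans h2.symm
  refine refl_section hHomeo hrefl (fun y => ⟨j y, congrFun key y⟩)
    (Continuous.subtype_mk hjc _) ?_
  funext x; exact Subtype.ext (congrFun hjμ x)

lemma sierp_mem {K : (X : Type) → TopologicalSpace X → Prop}
    (hT0 : ∀ X t, K X t → @T0Space X t)
    (hHomeo : ∀ (X Y : Type) (tX : TopologicalSpace X) (tY : TopologicalSpace Y),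
      K X tX → Nonempty (@Homeomorph X Y tX tY) → K Y tY)
    (hRefl : ∀ (X : Type) (tX : TopologicalSpace X), @T0Space X tX →
      ∃ (Xk : Type) (tk : TopologicalSpace Xk) (μ : X → Xk), IsReflection K tX tk μ)
    (hNotT1 : ∃ X t, K X t ∧ ¬ @T1Space X t) :
    K Prop inferInstance := by
  classical
  obtain ⟨Z, tZ, hKZ, hnT1⟩ := hNotT1
  letI := tZ
  haveI : T0Space Z := hT0 _ _ hKZ
  -- get a ≠ b with a ∈ closure {b}
  have : ∃ a b : Z, a ≠ b ∧ a ∈ closure {b} := by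
    by_contra h
    push_neg at h
    refine hnT1 ⟨fun b => ?_⟩
    have : closure {b} ⊆ {b} := fun a ha => by
      by_contra hne
      exact h a b (by simpa using hne) ha
    exact isClosed_of_closure_subset this
  obtain ⟨a, b, hab, hacl⟩ := this
  -- open U with b ∈ U, a ∉ U
  have hspec : b ⤳ a := specializes_iff_mem_closure.2 hacl
  have : ¬ (a ⤳ b) := fun h => hab ((h.antisymm hspec).eq)
  rw [specializes_iff_forall_open] at this
  push_neg at this
  obtain ⟨U, hU, hbU, haU⟩ := this
  set r : Z → Prop := fun z => z ∈ U with hr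
  have hrc : Continuous r := continuous_Prop.2 hU
  set f : Prop → Z := fun p => if p then b else a with hfdef
  have hfc : Continuous f := by
    rw [continuous_def]
    intro V hV
    by_cases haV : a ∈ V
    · have hbV : b ∈ V := by
        rcases mem_closure_iff.1 hacl V hV haV with ⟨y, hy1, hy2⟩
        simpa using hy2 ▸ hy1
      convert isOpen_univ
      ext p; by_cases hp : p <;> simp [f, hp, haV, hbV]
    · by_cases hbV : b ∈ V
      · have : f ⁻¹' V = {True} := by
          ext p; by_cases hp : p <;> simp [f, hp, haV, hbV]
        rw [this]; exact isOpen_singleton_true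
      · convert isOpen_empty
        ext p; by_cases hp : p <;> simp [f, hp, haV, hbV]
  have hrf : ∀ p : Prop, r (f p) = p := by
    intro p
    by_cases hp : p <;> simp [f, r, hp, hbU, haU]
  -- Sierpinski is the equalizer of id and f ∘ r
  have hEq := hasEq' hT0 hHomeo hRefl Z Z tZ tZ hKZ hKZ (fun z => z) (f ∘ r)
    continuous_id (hfc.comp hrc)
  set E := {z : Z | (fun z => z) z = (f ∘ r) z} with hE
  have e : @Homeomorph E Prop (TopologicalSpace.induced Subtype.val tZ) inferInstance := by
    letI : TopologicalSpace E := TopologicalSpace.induced Subtype.val tZ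
    exact
    { toFun := fun z => r z.1
      invFun := fun p => ⟨f p, show (fun z => z) (f p) = (f ∘ r) (f p) by
        simp only [Function.comp_apply]; rw [hrf]⟩
      left_inv := fun z => Subtype.ext (z.2).symm
      right_inv := fun p => hrf p
      continuous_toFun := hrc.comp continuous_subtype_val
      continuous_invFun := Continuous.subtype_mk hfc _ }
  exact hHomeo E Prop _ _ hEq ⟨e⟩

section SoberPart
variable (X : Type) (tX : TopologicalSpace X)

lemma sober_in {K : (X : Type) → TopologicalSpace X → Prop}
    (hHomeo : ∀ (X Y : Type) (tX : TopologicalSpace X) (tY : TopologicalSpace Y),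
      K X tX → Nonempty (@Homeomorph X Y tX tY) → K Y tY)
    (hProd : ∀ (I : Type) (Z : I → Type) (t : ∀ i, TopologicalSpace (Z i)),
      (∀ i, K (Z i) (t i)) → K (∀ i, Z i) (@Pi.topologicalSpace I Z t))
    (hEq : ∀ (A B : Type) (tA : TopologicalSpace A) (tB : TopologicalSpace B),
      K A tA → K B tB → ∀ f g : A → B, @Continuous A B tA tB f → @Continuous A B tA tB g →
        K {x | f x = g x} (TopologicalSpace.induced Subtype.val tA))
    (hS : K Prop inferInstance)
    (hT0X : @T0Space X tX) (hQS : @QuasiSober X tX) : K X tX := by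
  classical
  letI := tX
  set O := {U : Set X // IsOpen U} with hO
  set P := O → Prop with hP
  set e : X → P := fun x U => x ∈ U.1 with he
  set Idx := Sum (O × O) (Sum (Set O) Unit) with hIdx
  set opU : Set O → O := fun 𝒰 => ⟨⋃ U ∈ 𝒰, U.1, isOpen_biUnion fun U _ => U.2⟩ with hopU
  set F : P → (Idx → Prop) := fun φ i =>
    match i with
    | Sum.inl (U, V) => φ ⟨U.1 ∩ V.1, U.2.inter V.2⟩
    | Sum.inr (Sum.inl 𝒰) => φ (opU 𝒰)
    | Sum.inr (Sum.inr _) => φ ⟨Set.univ, isOpen_univ⟩ with hF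
  set G : P → (Idx → Prop) := fun φ i =>
    match i with
    | Sum.inl (U, V) => φ U ∧ φ V
    | Sum.inr (Sum.inl 𝒰) => ∃ U ∈ 𝒰, φ U
    | Sum.inr (Sum.inr _) => True with hG
  have isOpenEval : ∀ W : O, IsOpen {φ : P | φ W} := fun W =>
    continuous_Prop.1 (continuous_apply W)
  have hFc : Continuous F := continuous_pi fun i => by
    rcases i with ⟨U, V⟩ | 𝒰 | u
    · exact continuous_apply _
    · exact continuous_apply _
    · exact continuous_apply _
  have hGc : Continuous G := continuous_pi fun i => by
    rcases i with ⟨U, V⟩ | 𝒰 | u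
    · refine continuous_Prop.2 ?_
      exact (isOpenEval U).inter (isOpenEval V)
    · refine continuous_Prop.2 ?_
      have : {φ : P | ∃ U ∈ 𝒰, φ U} = ⋃ U ∈ 𝒰, {φ : P | φ U} := by
        ext φ; simp
      rw [this]
      exact isOpen_biUnion fun U _ => isOpenEval U
    · exact continuous_const
  -- e lands in the equalizer
  have hmemE : ∀ x, F (e x) = G (e x) := by
    intro x; funext i
    rcases i with ⟨U, V⟩ | 𝒰 | u
    · simp [F, G, e, eq_iff_iff, Set.mem_inter_iff]
    · simp [F, G, e, opU, eq_iff_iff]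
    · simp [F, G, e, eq_iff_iff]
  -- e is injective
  have hinj : Function.Injective e := by
    intro x y hxy
    refine (inseparable_iff_forall_isOpen.2 fun s hs => ?_).eq
    have := congrFun hxy ⟨s, hs⟩
    exact iff_of_eq this
  -- e is surjective onto the equalizer
  have hsurj : ∀ φ : P, F φ = G φ → ∃ x, e x = φ := by
    intro φ hφ
    have hmeet : ∀ U V : O, φ ⟨U.1 ∩ V.1, U.2.inter V.2⟩ = (φ U ∧ φ V) :=
      fun U V => congrFun hφ (Sum.inl (U, V))
    have hsup : ∀ 𝒰 : Set O, φ (opU 𝒰) = ∃ U ∈ 𝒰, φ U :=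
      fun 𝒰 => congrFun hφ (Sum.inr (Sum.inl 𝒰))
    have htop : φ ⟨Set.univ, isOpen_univ⟩ = True := congrFun hφ (Sum.inr (Sum.inr ()))
    have hcong : ∀ U V : O, U.1 = V.1 → φ U = φ V := fun U V h =>
      congrArg φ (Subtype.ext h)
    have hmono : ∀ U V : O, U.1 ⊆ V.1 → φ U → φ V := by
      intro U V hsub hU
      have h2 : U.1 ∩ V.1 = U.1 := Set.inter_eq_self_of_subset_left hsub
      have := (hcong _ _ h2).symm.trans (hmeet U V)
      rw [this] at hU
      exact hU.2
    set 𝒞 : Set O := {U : O | ¬ φ U} with h𝒞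
    set C : O := opU 𝒞 with hC
    have hφC : ¬ φ C := by
      rw [hsup]
      rintro ⟨U, hU, hφU⟩
      exact hU hφU
    set Fs : Set X := (C.1)ᶜ with hFs
    have hsubC : ∀ U : O, ¬ φ U → U.1 ⊆ C.1 := by
      intro U hU x hx
      exact Set.mem_biUnion hU hx
    have hmeets : ∀ u : O, φ u ↔ (Fs ∩ u.1).Nonempty := by
      intro u
      constructor
      · intro hu
        by_contra hne
        have hsub : u.1 ⊆ C.1 := by
          intro x hx
          by_contra hxC
          exact hne ⟨x, hxC, hx⟩
        exact hφC (hmono u C hsub hu)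
      · rintro ⟨x, hxF, hxu⟩
        by_contra hu
        exact hxF (hsubC u hu hxu)
    have hne : Fs.Nonempty := by
      have : φ ⟨Set.univ, isOpen_univ⟩ := htop ▸ trivial
      obtain ⟨x, hx, -⟩ := (hmeets _).1 this
      exact ⟨x, hx⟩
    have hirr : IsIrreducible Fs := by
      refine ⟨hne, fun u v hu hv hu' hv' => ?_⟩
      have h1 : φ ⟨u, hu⟩ := (hmeets ⟨u, hu⟩).2 hu'
      have h2 : φ ⟨v, hv⟩ := (hmeets ⟨v, hv⟩).2 hv'
      have h3 : φ ⟨u ∩ v, hu.inter hv⟩ := by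
        rw [hmeet ⟨u, hu⟩ ⟨v, hv⟩]; exact ⟨h1, h2⟩
      exact (hmeets ⟨u ∩ v, hu.inter hv⟩).1 h3
    obtain ⟨x, hgen⟩ := hQS.sober hirr C.2.isClosed_compl
    refine ⟨x, ?_⟩
    funext U
    show (x ∈ U.1) = φ U
    apply propext
    rw [hmeets U]
    constructor
    · intro hx
      exact ⟨x, hgen ▸ subset_closure rfl, hx⟩
    · rintro ⟨y, hyF, hyU⟩
      rw [← hgen] at hyF
      obtain ⟨z, hz1, hz2⟩ := mem_closure_iff.1 hyF U.1 U.2 hyU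
      simpa [hz2] using hz2 ▸ hz1
  -- continuity of e
  have hec : Continuous e := continuous_pi fun U => continuous_Prop.2 U.2
  -- K contains P and Idx → Prop
  have hKP : K P (Pi.topologicalSpace) := hProd O (fun _ => Prop) _ (fun _ => hS)
  have hKI : K (Idx → Prop) (Pi.topologicalSpace) := hProd Idx (fun _ => Prop) _ (fun _ => hS)
  have hKE := hEq P (Idx → Prop) _ _ hKP hKI F G hFc hGc
  set E := {φ : P | F φ = G φ} with hE
  letI tE : TopologicalSpace E := TopologicalSpace.induced Subtype.val inferInstance
  set e' : X → E := fun x => ⟨e x, hmemE x⟩ with he'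
  have hsurj' : ∀ z : E, ∃ x, e x = z.1 := fun z => hsurj z.1 z.2
  set inv : E → X := fun z => Classical.choose (hsurj' z) with hinvdef
  have hinv : ∀ z : E, e (inv z) = z.1 := fun z => Classical.choose_spec (hsurj' z)
  have homeo : @Homeomorph X E tX tE :=
    { toFun := e'
      invFun := inv
      left_inv := fun x => hinj (hinv (e' x))
      right_inv := fun z => Subtype.ext (hinv z)
      continuous_toFun := hec.subtype_mk _
      continuous_invFun := by
        rw [continuous_def]
        intro V hV
        have : inv ⁻¹' V = Subtype.val ⁻¹' {φ : P | φ ⟨V, hV⟩} := by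
          ext z
          show inv z ∈ V ↔ z.1 ⟨V, hV⟩
          have := congrFun (hinv z) ⟨V, hV⟩
          exact iff_of_eq this.symm |>.symm
        rw [this]
        exact (isOpenEval ⟨V, hV⟩).preimage continuous_subtype_val }
  exact hHomeo E X tE tX hKE ⟨homeo.symm⟩

end SoberPart

/-- a reflective full subcategory of Top₀ closed under homeomorphisms containing a
non-T₁ space contains every sober space. -/
theorem statement5 (K : SpaceClass) (hT0 : AllT0 K) (hHomeo : ClosedUnderHomeo K)
    (hRefl : IsReflective K) (hNotT1 : NotSubT1 K) :
    ∀ (X : Type) (tX : TopologicalSpace X), Sober X tX → K X tX := by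
  intro X tX hSob
  obtain ⟨hT0X, hQS⟩ := hSob
  have hRefl' : ∀ (A : Type) (tA : TopologicalSpace A), @T0Space A tA →
      ∃ (Ak : Type) (tk : TopologicalSpace Ak) (μ : A → Ak), IsReflection K tA tk μ := hRefl
  have hHomeo' : ∀ (A B : Type) (tA : TopologicalSpace A) (tB : TopologicalSpace B),
      K A tA → Nonempty (@Homeomorph A B tA tB) → K B tB := hHomeo
  have hT0' : ∀ A t, K A t → @T0Space A t := hT0
  have hS : K Prop inferInstance := sierp_mem hT0' hHomeo' hRefl' hNotT1
  exact sober_in X tX hHomeo'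
    (fun I Z t h => productive' hT0' hHomeo' hRefl' I Z t h)
    (fun A B tA tB hA hB f g hf hg => hasEq' hT0' hHomeo' hRefl' A B tA tB hA hB f g hf hg)
    hS hT0X hQS
end

section
/- If K is a reflective full subcategory of Top₀ closed under homeomorphisms that contains the Sierpiński space Σ2, then K contains every sober space. Consequently, since Sob is itself reflective in Top₀, the reflective hull of the category Sier of spaces homeomorphic to Σ2 is exactly Sob. -/
open TopologicalSpace

/-- The class of sober spaces. -/
def SobClass : SpaceClass := fun X t => Sober X t

/-- The class of spaces homeomorphic to the Sierpiński space. -/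
def SierClass : SpaceClass := fun X t => Nonempty (@Homeomorph X Prop t sierpinskiSpace)

/-! ### Auxiliary lemmas -/

section Aux

open Topology

lemma inter_closure_nonempty_iff' {X : Type} [TopologicalSpace X] {s U : Set X}
    (hU : IsOpen U) : (closure s ∩ U).Nonempty ↔ (s ∩ U).Nonempty := by
  constructor
  · rintro ⟨z, hz, hzU⟩
    have h2 : z ∈ closure (U ∩ s) := hU.inter_closure ⟨hzU, hz⟩
    have := closure_nonempty_iff.mp ⟨z, h2⟩
    exact this.imp fun x hx => ⟨hx.2, hx.1⟩
  · rintro ⟨z, hz, hzU⟩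
    exact ⟨z, subset_closure hz, hzU⟩

lemma mem_of_closure_singleton_inter {X : Type} [TopologicalSpace X] {x : X} {U : Set X}
    (hU : IsOpen U) (h : (closure ({x} : Set X) ∩ U).Nonempty) : x ∈ U := by
  obtain ⟨z, hz1, hz2⟩ := (inter_closure_nonempty_iff' hU).mp h
  rwa [← hz1]

/-! ### Part 1: the main argument -/

lemma sober_mem_of_reflective (K : SpaceClass) (hT0 : AllT0 K) (hHomeo : ClosedUnderHomeo K)
    (hRefl : IsReflective K) (hSier : K Prop sierpinskiSpace)
    (X : Type) (tX : TopologicalSpace X) (hX : Sober X tX) : K X tX := by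
  obtain ⟨Xk, tk, μ, hKk, hμc, huniv⟩ := hRefl X tX hX.1
  letI := tX; letI := tk
  haveI : T0Space X := hX.1
  haveI : QuasiSober X := hX.2
  haveI : T0Space Xk := hT0 _ _ hKk
  -- Step A: every open of X is a preimage of an open of Xk
  have stepA : ∀ U : Set X, IsOpen U → ∃ W : Set Xk, IsOpen W ∧ U = μ ⁻¹' W := by
    intro U hU
    obtain ⟨g, ⟨hg, hgμ⟩, -⟩ := huniv Prop sierpinskiSpace hSier (fun x => x ∈ U)
      (isOpen_iff_continuous_mem.mp hU)
    refine ⟨g ⁻¹' {True}, hg.isOpen_preimage _ isOpen_singleton_true, ?_⟩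
    ext x
    have h := congrFun hgμ x
    simp only [Function.comp_apply] at h
    simp only [Set.mem_preimage, Set.mem_singleton_iff, h]
    exact ⟨fun hx => eq_true hx, of_eq_true⟩
  -- Step B: μ is inducing
  have hind : IsInducing μ := by
    refine ⟨le_antisymm (continuous_iff_le_induced.mp hμc) ?_⟩
    rw [TopologicalSpace.le_def]
    intro s hs
    obtain ⟨W, hW, rfl⟩ := stepA s hs
    exact ⟨W, hW, rfl⟩
  -- Step C: μ is injective
  have hμinj : Function.Injective μ := by
    intro a b hab
    apply Inseparable.eq
    rw [inseparable_iff_forall_isOpen]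
    intro U hU
    obtain ⟨W, hW, rfl⟩ := stepA U hU
    simp only [Set.mem_preimage, hab]
  -- Step D: μ⁻¹ is injective on open sets
  have hinj : ∀ W₁ W₂ : Set Xk, IsOpen W₁ → IsOpen W₂ → μ ⁻¹' W₁ = μ ⁻¹' W₂ → W₁ = W₂ := by
    intro W₁ W₂ h₁ h₂ hpre
    obtain ⟨g, hg, hgu⟩ := huniv Prop sierpinskiSpace hSier (fun x => μ x ∈ W₁)
      ((isOpen_iff_continuous_mem.mp h₁).comp hμc)
    have e1 : (fun y => y ∈ W₁) = g := hgu _ ⟨isOpen_iff_continuous_mem.mp h₁, rfl⟩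
    have e2 : (fun y => y ∈ W₂) = g := by
      refine hgu _ ⟨isOpen_iff_continuous_mem.mp h₂, ?_⟩
      funext x
      exact propext (Set.ext_iff.mp hpre x).symm
    ext y
    exact iff_of_eq (congrFun (e1.trans e2.symm) y)
  -- Step E: density of the image of μ
  have stepE : ∀ (y : Xk) (W : Set Xk), IsOpen W → y ∈ W →
      (μ ⁻¹' (W ∩ closure {y})).Nonempty := by
    intro y W hW hyW
    by_contra hemp
    rw [Set.not_nonempty_iff_eq_empty] at hemp
    have hW' : IsOpen (W ∩ (closure {y})ᶜ) := hW.inter isClosed_closure.isOpen_compl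
    have hpre : μ ⁻¹' W = μ ⁻¹' (W ∩ (closure {y})ᶜ) := by
      ext x
      simp only [Set.mem_preimage, Set.mem_inter_iff, Set.mem_compl_iff]
      refine ⟨fun h => ⟨h, fun hc => ?_⟩, fun h => h.1⟩
      have hx : x ∈ μ ⁻¹' (W ∩ closure {y}) := ⟨h, hc⟩
      rw [hemp] at hx
      exact hx
    have heq := hinj W _ hW hW' hpre
    have hy2 : y ∈ W ∩ (closure {y})ᶜ := heq ▸ hyW
    exact hy2.2 (subset_closure rfl)
  -- Step F: μ is surjective
  have hμsurj : Function.Surjective μ := by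
    intro y
    have hCc : IsClosed (μ ⁻¹' (closure {y})) := isClosed_closure.preimage hμc
    have hCne : (μ ⁻¹' (closure {y})).Nonempty := by
      have := stepE y Set.univ isOpen_univ (Set.mem_univ y)
      simpa [Set.univ_inter] using this
    have hCirr : IsIrreducible (μ ⁻¹' (closure {y})) := by
      refine ⟨hCne, ?_⟩
      rintro U V hU hV ⟨x₁, hx₁C, hx₁U⟩ ⟨x₂, hx₂C, hx₂V⟩
      obtain ⟨WU, hWU, rfl⟩ := stepA U hU
      obtain ⟨WV, hWV, rfl⟩ := stepA V hV
      have hyU : y ∈ WU := mem_of_closure_singleton_inter hWU ⟨μ x₁, hx₁C, hx₁U⟩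
      have hyV : y ∈ WV := mem_of_closure_singleton_inter hWV ⟨μ x₂, hx₂C, hx₂V⟩
      obtain ⟨x, hx⟩ := stepE y (WU ∩ WV) (hWU.inter hWV) ⟨hyU, hyV⟩
      exact ⟨x, hx.2, hx.1.1, hx.1.2⟩
    obtain ⟨x₀, hx₀⟩ := QuasiSober.sober hCirr hCc
    have hx₀eq : closure ({x₀} : Set X) = μ ⁻¹' (closure {y}) := hx₀
    refine ⟨x₀, ?_⟩
    apply Inseparable.eq
    rw [inseparable_iff_forall_isOpen]
    intro W hW
    constructor
    · intro h
      have hx₀C : x₀ ∈ μ ⁻¹' (closure {y}) := by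
        rw [← hx₀eq]; exact subset_closure rfl
      exact mem_of_closure_singleton_inter hW ⟨μ x₀, hx₀C, h⟩
    · intro h
      obtain ⟨x, hx⟩ := stepE y W hW h
      have hxC : x ∈ closure ({x₀} : Set X) := by
        rw [hx₀eq]; exact hx.2
      show x₀ ∈ μ ⁻¹' W
      exact mem_of_closure_singleton_inter (hW.preimage hμc) ⟨x, hxC, hx.1⟩
  let e := Equiv.ofBijective μ ⟨hμinj, hμsurj⟩
  have hinde : IsInducing (⇑e) := hind
  exact hHomeo Xk X tk tX hKk ⟨(e.toHomeomorphOfIsInducing hinde).symm⟩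

/-! ### Part 2: sobrification -/

/-- The points of the sobrification: irreducible closed subsets. -/
def SobPt (X : Type) (t : TopologicalSpace X) : Type :=
  {C : Set X // IsIrreducible C ∧ @IsClosed X t C}

/-- The basic opens of the sobrification. -/
def sobOpen {X : Type} (t : TopologicalSpace X) (U : Set X) : Set (SobPt X t) :=
  {C | (C.1 ∩ U).Nonempty}

/-- The topology of the sobrification. -/
def sobTop (X : Type) (t : TopologicalSpace X) : TopologicalSpace (SobPt X t) :=
  TopologicalSpace.generateFrom {s | ∃ U, @IsOpen X t U ∧ s = sobOpen t U}

lemma isOpen_sobOpen {X : Type} [t : TopologicalSpace X] {U : Set X} (hU : IsOpen U) :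
    IsOpen[sobTop X t] (sobOpen t U) :=
  TopologicalSpace.GenerateOpen.basic _ ⟨U, hU, rfl⟩

lemma sob_open_iff {X : Type} [t : TopologicalSpace X] {s : Set (SobPt X t)} :
    IsOpen[sobTop X t] s ↔ ∃ U, IsOpen U ∧ s = sobOpen t U := by
  constructor
  · intro h
    have h' : TopologicalSpace.GenerateOpen {s | ∃ U, IsOpen U ∧ s = sobOpen t U} s := h
    clear h
    induction h' with
    | basic s hs => exact hs
    | univ =>
      refine ⟨Set.univ, isOpen_univ, ?_⟩
      ext C
      simp only [Set.mem_univ, true_iff, sobOpen, Set.mem_setOf_eq, Set.inter_univ]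
      exact C.2.1.1
    | inter s₁ s₂ h₁ h₂ ih₁ ih₂ =>
      obtain ⟨U₁, hU₁, rfl⟩ := ih₁
      obtain ⟨U₂, hU₂, rfl⟩ := ih₂
      refine ⟨U₁ ∩ U₂, hU₁.inter hU₂, ?_⟩
      ext C
      constructor
      · rintro ⟨h1, h2⟩
        exact C.2.1.2 U₁ U₂ hU₁ hU₂ h1 h2
      · rintro ⟨x, hxC, hx1, hx2⟩
        exact ⟨⟨x, hxC, hx1⟩, ⟨x, hxC, hx2⟩⟩
    | sUnion S hS ih =>
      choose f hf1 hf2 using ih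
      refine ⟨⋃ (p : {u // u ∈ S}), f p.1 p.2, isOpen_iUnion fun p => hf1 p.1 p.2, ?_⟩
      ext C
      constructor
      · rintro ⟨u, huS, hCu⟩
        rw [hf2 u huS] at hCu
        obtain ⟨x, hxC, hxf⟩ := hCu
        exact ⟨x, hxC, Set.mem_iUnion.mpr ⟨⟨u, huS⟩, hxf⟩⟩
      · rintro ⟨x, hxC, hxU⟩
        obtain ⟨⟨u, huS⟩, hxf⟩ := Set.mem_iUnion.mp hxU
        refine ⟨u, huS, ?_⟩
        rw [hf2 u huS]
        exact ⟨x, hxC, hxf⟩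
  · rintro ⟨U, hU, rfl⟩
    exact isOpen_sobOpen hU

/-- The unit of the sobrification. -/
def sobUnit {X : Type} [t : TopologicalSpace X] (x : X) : SobPt X t :=
  ⟨closure {x}, isIrreducible_singleton.closure, isClosed_closure⟩

lemma sobUnit_preimage {X : Type} [t : TopologicalSpace X] {U : Set X} (hU : IsOpen U) :
    (sobUnit : X → SobPt X t) ⁻¹' (sobOpen t U) = U := by
  ext x
  simp only [Set.mem_preimage, sobOpen, Set.mem_setOf_eq, sobUnit]
  exact ⟨fun h => mem_of_closure_singleton_inter hU h, fun h => ⟨x, subset_closure rfl, h⟩⟩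

lemma continuous_sobUnit {X : Type} [t : TopologicalSpace X] :
    Continuous[t, sobTop X t] (sobUnit : X → SobPt X t) := by
  show Continuous[t, TopologicalSpace.generateFrom _] (sobUnit : X → SobPt X t)
  rw [continuous_generateFrom_iff]
  rintro s ⟨U, hU, rfl⟩
  rw [sobUnit_preimage hU]
  exact hU

lemma t0_sobTop {X : Type} [t : TopologicalSpace X] : @T0Space (SobPt X t) (sobTop X t) := by
  letI := sobTop X t
  have key : ∀ C D : SobPt X t, (∀ s : Set (SobPt X t), IsOpen s → (C ∈ s ↔ D ∈ s)) →
      C.1 ⊆ D.1 := by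
    intro C D h x hxC
    by_contra hxD
    have hC : C ∈ sobOpen t D.1ᶜ := ⟨x, hxC, hxD⟩
    have hD := (h _ (isOpen_sobOpen D.2.2.isOpen_compl)).mp hC
    obtain ⟨z, hz1, hz2⟩ := hD
    exact hz2 hz1
  refine ⟨fun {C D} h => ?_⟩
  rw [inseparable_iff_forall_isOpen] at h
  exact Subtype.ext (Set.Subset.antisymm (key C D h)
    (key D C fun s hs => (h s hs).symm))

lemma quasiSober_sobTop {X : Type} [t : TopologicalSpace X] :
    @QuasiSober (SobPt X t) (sobTop X t) := by
  letI := sobTop X t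
  constructor
  intro S hS hS'
  obtain ⟨U, hU, hSU⟩ := sob_open_iff.mp hS'.isOpen_compl
  have hsubT : ∀ C : SobPt X t, C ∈ S → C.1 ⊆ Uᶜ := by
    intro C hCS x hx hxU
    have h1 : C ∈ sobOpen t U := ⟨x, hx, hxU⟩
    rw [← hSU] at h1
    exact h1 hCS
  have hTirr : IsIrreducible (Uᶜ : Set X) := by
    constructor
    · obtain ⟨C, hCS⟩ := hS.1
      obtain ⟨x, hx⟩ := C.2.1.1
      exact ⟨x, hsubT C hCS hx⟩
    · rintro V₁ V₂ hV₁ hV₂ ⟨x₁, hx₁T, hx₁V⟩ ⟨x₂, hx₂T, hx₂V⟩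
      have hm : ∀ x : X, x ∈ (Uᶜ : Set X) → (sobUnit x : SobPt X t) ∈ S := by
        intro x hx
        by_contra hxS
        have h1 : (sobUnit x : SobPt X t) ∈ Sᶜ := hxS
        rw [hSU] at h1
        exact hx (mem_of_closure_singleton_inter hU h1)
      have h1 : (S ∩ sobOpen t V₁).Nonempty :=
        ⟨sobUnit x₁, hm x₁ hx₁T, ⟨x₁, subset_closure rfl, hx₁V⟩⟩
      have h2 : (S ∩ sobOpen t V₂).Nonempty :=
        ⟨sobUnit x₂, hm x₂ hx₂T, ⟨x₂, subset_closure rfl, hx₂V⟩⟩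
      obtain ⟨C, hCS, hCV₁, hCV₂⟩ :=
        hS.2 _ _ (isOpen_sobOpen hV₁) (isOpen_sobOpen hV₂) h1 h2
      obtain ⟨z, hz1, hz2⟩ := C.2.1.2 V₁ V₂ hV₁ hV₂ hCV₁ hCV₂
      exact ⟨z, hsubT C hCS hz1, hz2⟩
  refine ⟨⟨Uᶜ, hTirr, hU.isClosed_compl⟩, ?_⟩
  show closure _ = S
  apply Set.Subset.antisymm
  · apply closure_minimal _ hS'
    refine Set.singleton_subset_iff.mpr ?_
    by_contra hTS
    have h1 : (⟨Uᶜ, hTirr, hU.isClosed_compl⟩ : SobPt X t) ∈ Sᶜ := hTS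
    rw [hSU] at h1
    obtain ⟨x, hx1, hx2⟩ := h1
    exact hx1 hx2
  · intro C hCS
    rw [mem_closure_iff]
    intro o ho hCo
    obtain ⟨V, hV, rfl⟩ := sob_open_iff.mp ho
    obtain ⟨x, hxC, hxV⟩ := hCo
    exact ⟨_, ⟨x, hsubT C hCS hxC, hxV⟩, rfl⟩

lemma sob_reflection {X : Type} [t : TopologicalSpace X] (Z : Type) (tZ : TopologicalSpace Z)
    (hZ : SobClass Z tZ) (f : X → Z) (hf : Continuous[t, tZ] f) :
    ∃! g : SobPt X t → Z, Continuous[sobTop X t, tZ] g ∧ g ∘ sobUnit = f := by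
  letI := tZ
  letI tS := sobTop X t
  haveI : T0Space Z := hZ.1
  haveI : QuasiSober Z := hZ.2
  have himg : ∀ C : SobPt X t, IsIrreducible (f '' C.1) := fun C =>
    C.2.1.image f hf.continuousOn
  let g : SobPt X t → Z := fun C => (himg C).genericPoint
  have hgen : ∀ C, IsGenericPoint (g C) (closure (f '' C.1)) := fun C =>
    (himg C).isGenericPoint_genericPoint_closure
  have hgV : ∀ V : Set Z, IsOpen V → g ⁻¹' V = sobOpen t (f ⁻¹' V) := by
    intro V hV
    ext C
    simp only [Set.mem_preimage, sobOpen, Set.mem_setOf_eq]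
    constructor
    · intro h
      have h0 : g C ∈ closure {g C} := subset_closure rfl
      rw [hgen C] at h0
      have h1 : (closure (f '' C.1) ∩ V).Nonempty := ⟨g C, h0, h⟩
      obtain ⟨z, ⟨x, hxC, rfl⟩, hzV⟩ := (inter_closure_nonempty_iff' hV).mp h1
      exact ⟨x, hxC, hzV⟩
    · rintro ⟨x, hxC, hxV⟩
      have h1 : (closure ({g C} : Set Z) ∩ V).Nonempty := by
        rw [hgen C]
        exact ⟨f x, subset_closure ⟨x, hxC, rfl⟩, hxV⟩
      exact mem_of_closure_singleton_inter hV h1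
  have hgc : Continuous[sobTop X t, tZ] g := by
    rw [continuous_def]
    intro V hV
    rw [hgV V hV]
    exact isOpen_sobOpen (hV.preimage hf)
  have hcomp : g ∘ sobUnit = f := by
    funext x
    apply Inseparable.eq
    rw [inseparable_iff_closure_eq]
    show closure {g (sobUnit x)} = closure {f x}
    have := hgen (sobUnit x)
    rw [IsGenericPoint] at this
    rw [this]
    apply Set.Subset.antisymm
    · apply closure_minimal _ isClosed_closure
      calc f '' closure {x} ⊆ closure (f '' {x}) := image_closure_subset_closure_image hf
        _ = closure {f x} := by rw [Set.image_singleton]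
    · exact closure_mono (Set.singleton_subset_iff.mpr ⟨x, subset_closure rfl, rfl⟩)
  have key : ∀ a b : SobPt X t → Z, Continuous[sobTop X t, tZ] a → Continuous[sobTop X t, tZ] b →
      a ∘ sobUnit = f → b ∘ sobUnit = f →
      ∀ (C : SobPt X t) (V : Set Z), IsOpen V → a C ∈ V → b C ∈ V := by
    intro a b hac hbc haf hbf C V hV haV
    obtain ⟨W, hW, hWeq⟩ := sob_open_iff.mp (hV.preimage hac)
    have hCW : C ∈ sobOpen t W := by rw [← hWeq]; exact haV
    obtain ⟨x, hxC, hxW⟩ := hCW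
    have h1 : (sobUnit x : SobPt X t) ∈ a ⁻¹' V := by
      rw [hWeq]; exact ⟨x, subset_closure rfl, hxW⟩
    have h2 : f x ∈ V := by rw [← haf]; exact h1
    have h3 : (sobUnit x : SobPt X t) ∈ b ⁻¹' V := by
      show b (sobUnit x) ∈ V
      rw [show b (sobUnit x) = f x from congrFun hbf x]
      exact h2
    obtain ⟨W₂, hW₂, hW₂eq⟩ := sob_open_iff.mp (hV.preimage hbc)
    have h4 : (sobUnit x : SobPt X t) ∈ sobOpen t W₂ := by rw [← hW₂eq]; exact h3
    obtain ⟨y, hy1, hy2⟩ := h4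
    have hyC : y ∈ C.1 := by
      have hsub : closure ({x} : Set X) ⊆ C.1 :=
        closure_minimal (Set.singleton_subset_iff.mpr hxC) C.2.2
      exact hsub hy1
    have h5 : C ∈ b ⁻¹' V := by rw [hW₂eq]; exact ⟨y, hyC, hy2⟩
    exact h5
  refine ⟨g, ⟨hgc, hcomp⟩, ?_⟩
  rintro g₂ ⟨hg₂c, hg₂comp⟩
  funext C
  apply Inseparable.eq
  rw [inseparable_iff_forall_isOpen]
  intro V hV
  exact ⟨fun h => key g₂ g hg₂c hgc hg₂comp hcomp C V hV h,
    fun h => key g g₂ hgc hg₂c hcomp hg₂comp C V hV h⟩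

lemma sobClass_reflective : IsReflective SobClass := by
  intro X tX _
  letI := tX
  exact ⟨SobPt X tX, sobTop X tX, sobUnit,
    ⟨t0_sobTop, quasiSober_sobTop⟩, continuous_sobUnit, sob_reflection⟩

/-! ### Part 3: the Sierpiński space is sober -/

lemma true_mem_of_isOpen {s : Set Prop} (hs : IsOpen s) {p : Prop} (hp : p ∈ s) : True ∈ s := by
  have hs' : TopologicalSpace.GenerateOpen {{True}} s := hs
  clear hs
  induction hs' with
  | basic u hu =>
    rw [Set.mem_singleton_iff] at hu
    subst hu
    exact rfl
  | univ => trivial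
  | inter u v hu hv ihu ihv => exact ⟨ihu hp.1, ihv hp.2⟩
  | sUnion S hS ih =>
    obtain ⟨u, huS, hpu⟩ := hp
    exact ⟨u, huS, ih u huS hpu⟩

lemma closure_singleton_true : closure ({True} : Set Prop) = Set.univ := by
  apply Set.eq_univ_of_forall
  intro p
  rw [mem_closure_iff]
  intro o ho hpo
  exact ⟨True, true_mem_of_isOpen ho hpo, rfl⟩

lemma isClosed_singleton_false : IsClosed ({False} : Set Prop) := by
  rw [← isOpen_compl_iff]
  have : ({False}ᶜ : Set Prop) = {True} := by
    ext p
    simp only [Set.mem_compl_iff, Set.mem_singleton_iff, eq_iff_iff, iff_false, not_not,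
      iff_true]
  rw [this]
  exact isOpen_singleton_true

lemma sober_sierpinski : Sober Prop sierpinskiSpace := by
  constructor
  · refine ⟨fun {p q} h => ?_⟩
    rw [inseparable_iff_forall_isOpen] at h
    have := h {True} isOpen_singleton_true
    simp only [Set.mem_singleton_iff, eq_iff_iff, iff_true] at this
    exact propext this
  · constructor
    intro S hS hS'
    by_cases hT : True ∈ S
    · refine ⟨True, ?_⟩
      show closure _ = S
      have h1 : closure ({True} : Set Prop) ⊆ S :=
        closure_minimal (Set.singleton_subset_iff.mpr hT) hS'
      rw [closure_singleton_true] at h1 ⊢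
      exact (Set.eq_univ_of_univ_subset h1).symm
    · refine ⟨False, ?_⟩
      show closure _ = S
      rw [isClosed_singleton_false.closure_eq]
      ext p
      simp only [Set.mem_singleton_iff]
      constructor
      · rintro rfl
        obtain ⟨q, hq⟩ := hS.1
        rcases (Classical.em q).imp eq_true eq_false with h | h
        · rw [h] at hq; exact absurd hq hT
        · rwa [h] at hq
      · intro hp
        rcases (Classical.em p).imp eq_true eq_false with h | h
        · rw [h] at hp; exact absurd hp hT
        · exact h

lemma sober_of_homeo {X Y : Type} (tX : TopologicalSpace X) (tY : TopologicalSpace Y)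
    (e : @Homeomorph X Y tX tY) (h : Sober X tX) : Sober Y tY := by
  letI := tX; letI := tY
  haveI : T0Space X := h.1
  haveI : QuasiSober X := h.2
  exact ⟨e.symm.isEmbedding.t0Space, e.symm.isClosedEmbedding.quasiSober⟩

end Aux

/-- every reflective full subcategory of Top₀ closed under homeomorphisms that
contains the Sierpiński space contains every sober space; consequently, `Sob` is reflective,
contains `Sier`, and is the smallest such reflective subcategory, i.e. the reflective hull of
`Sier` is `Sob`. -/
theorem statement7 :
    (∀ K : SpaceClass, AllT0 K → ClosedUnderHomeo K → IsReflective K →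
      K Prop sierpinskiSpace →
      ∀ (X : Type) (tX : TopologicalSpace X), Sober X tX → K X tX)
    ∧ IsReflective SobClass
    ∧ (∀ (X : Type) (t : TopologicalSpace X), SierClass X t → SobClass X t)
    ∧ (∀ K : SpaceClass, AllT0 K → ClosedUnderHomeo K → IsReflective K →
        (∀ (X : Type) (t : TopologicalSpace X), SierClass X t → K X t) →
        ∀ (X : Type) (t : TopologicalSpace X), SobClass X t → K X t) := by
  refine ⟨sober_mem_of_reflective, sobClass_reflective, ?_, ?_⟩
  · rintro X t ⟨e⟩
    exact sober_of_homeo sierpinskiSpace t e.symm sober_sierpinski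
  · intro K h1 h2 h3 h4 X t hX
    exact sober_mem_of_reflective K h1 h2 h3
      (h4 Prop sierpinskiSpace ⟨Homeomorph.refl Prop⟩) X t hX
end

section
/- Let K be a full subcategory of Top₀ closed under homeomorphisms such that K ⊄ Top₁. Then K is reflective in Top₀ if and only if K is productive and b-closed-hereditary. -/
open TopologicalSpace

/- ### Auxiliary material -/

open Set

lemma bTop_basic_open {X : Type} (t : TopologicalSpace X) {U : Set X} {x : X}
    (hU : @IsOpen X t U) (hx : x ∈ U) :
    @IsOpen X (bTop X t) (U ∩ @closure X t {x}) :=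
  @TopologicalSpace.isOpen_generateFrom_of_mem X _ _ ⟨U, x, hU, hx, rfl⟩

lemma bTop_isBasis {X : Type} (t : TopologicalSpace X) :
    @TopologicalSpace.IsTopologicalBasis X (bTop X t)
      {s | ∃ (U : Set X) (x : X), @IsOpen X t U ∧ x ∈ U ∧ s = U ∩ @closure X t {x}} := by
  refine @TopologicalSpace.IsTopologicalBasis.mk X (bTop X t) _ ?_ ?_ rfl
  · letI := t
    rintro s₁ ⟨U, x, hU, hxU, rfl⟩ s₂ ⟨V, y, hV, hyV, rfl⟩ z ⟨⟨hzU, hzx⟩, hzV, hzy⟩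
    refine ⟨(U ∩ V) ∩ closure {z}, ⟨U ∩ V, z, hU.inter hV, ⟨hzU, hzV⟩, rfl⟩,
      ⟨⟨hzU, hzV⟩, subset_closure rfl⟩, ?_⟩
    rintro w ⟨⟨hwU, hwV⟩, hwz⟩
    have h1 : closure {z} ⊆ closure {x} :=
      closure_minimal (singleton_subset_iff.2 hzx) isClosed_closure
    have h2 : closure {z} ⊆ closure {y} :=
      closure_minimal (singleton_subset_iff.2 hzy) isClosed_closure
    exact ⟨⟨hwU, h1 hwz⟩, hwV, h2 hwz⟩
  · letI := t
    ext z
    simp only [mem_sUnion, mem_univ, iff_true]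
    exact ⟨univ ∩ closure {z}, ⟨univ, z, isOpen_univ, mem_univ z, rfl⟩, mem_univ z,
      subset_closure rfl⟩

open Classical in
noncomputable def chi {X Z : Type} (W : Set X) (a b : Z) : X → Z :=
  fun x => if x ∈ W then b else a

lemma chi_continuous {X Z : Type} (tX : TopologicalSpace X) (tZ : TopologicalSpace Z)
    {a b : Z} (hab : a ∈ @closure Z tZ {b}) {W : Set X} (hW : @IsOpen X tX W) :
    @Continuous X Z tX tZ (chi W a b) := by
  letI := tX; letI := tZ
  rw [continuous_def]
  intro V hV
  by_cases hb : b ∈ V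
  · by_cases ha : a ∈ V
    · have : chi W a b ⁻¹' V = univ := by
        ext x; simp only [mem_preimage, mem_univ, iff_true, chi]
        split <;> assumption
      rw [this]; exact isOpen_univ
    · have : chi W a b ⁻¹' V = W := by
        ext x; simp only [mem_preimage, chi]
        split <;> simp_all
      rw [this]; exact hW
  · have ha : a ∉ V := fun ha => by
      obtain ⟨w, hwV, hwb⟩ := mem_closure_iff.mp hab V hV ha
      exact hb (hwb ▸ hwV)
    have : chi W a b ⁻¹' V = ∅ := by
      ext x; simp only [mem_preimage, mem_empty_iff_false, iff_false, chi]
      split <;> assumption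
    rw [this]; exact isOpen_empty

lemma bClosure_inj {X Z : Type} (tZ : TopologicalSpace Z) (hZ : @T0Space Z tZ) (f : X → Z) :
    Function.Injective (fun (p : ↥(@closure Z (bTop Z tZ) (Set.range f))) =>
      {x : X | f x ∈ @closure Z tZ {p.val}}) := by
  letI := tZ
  have key : ∀ (p q : ↥(@closure Z (bTop Z tZ) (Set.range f))),
      {x : X | f x ∈ closure {p.val}} = {x : X | f x ∈ closure {q.val}} →
      p.val ∉ closure {q.val} → False := by
    intro p q hset hpq
    have hopen : @IsOpen Z (bTop Z tZ) ((closure {q.val})ᶜ ∩ closure {p.val}) :=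
      bTop_basic_open tZ (isClosed_closure.isOpen_compl) hpq
    have hmem : p.val ∈ (closure {q.val})ᶜ ∩ closure {p.val} := ⟨hpq, subset_closure rfl⟩
    obtain ⟨z, ⟨hz1, hz2⟩, x, rfl⟩ :=
      (@mem_closure_iff Z (bTop Z tZ) p.val (Set.range f)).mp p.property _ hopen hmem
    have hx : x ∈ {x : X | f x ∈ closure {p.val}} := hz2
    rw [hset] at hx
    exact hz1 hx
  intro p q h
  apply Subtype.ext
  by_contra hne
  have hnotinsep : ¬ Inseparable p.val q.val := fun hin => hne hin.eq
  rcases not_and_or.mp (inseparable_iff_specializes_and.not.mp hnotinsep) with hc | hc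
  · exact key q p h.symm (fun hm => hc (specializes_iff_mem_closure.mpr hm))
  · exact key p q h (fun hm => hc (specializes_iff_mem_closure.mpr hm))

lemma refl_productive (K : SpaceClass) (hT0 : AllT0 K) (hHomeo : ClosedUnderHomeo K)
    (hRefl : IsReflective K) : Productive K := by
  intro I X t hK
  letI : ∀ i, TopologicalSpace (X i) := t
  haveI : ∀ i, T0Space (X i) := fun i => hT0 _ _ (hK i)
  obtain ⟨Xk, tk, μ, hKk, hμ, hfac⟩ :=
    hRefl (∀ i, X i) Pi.topologicalSpace inferInstance
  letI := tk
  have hproj : ∀ i, Continuous (fun p : ∀ j, X j => p i) := fun i => continuous_apply i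
  choose g hg using fun i => (hfac (X i) (t i) (hK i) _ (hproj i)).exists
  set G : Xk → (∀ i, X i) := fun y i => g i y with hGdef
  have hGc : Continuous G := continuous_pi fun i => (hg i).1
  have hGμ : ∀ x, G (μ x) = x := fun x => funext fun i => congrFun (hg i).2 x
  obtain ⟨m, _, muniq⟩ := hfac Xk tk hKk μ hμ
  have u1 : μ ∘ G = m := muniq _ ⟨hμ.comp hGc, funext fun x => by simp [hGμ x]⟩
  have u2 : id = m := muniq _ ⟨continuous_id, rfl⟩
  have hμG : ∀ y, μ (G y) = y := fun y => congrFun (u1.trans u2.symm) y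
  exact hHomeo Xk (∀ i, X i) tk Pi.topologicalSpace hKk
    ⟨@Homeomorph.mk Xk (∀ i, X i) tk Pi.topologicalSpace ⟨G, μ, hμG, hGμ⟩ hGc hμ⟩

lemma refl_equalizers (K : SpaceClass) (hT0 : AllT0 K) (hHomeo : ClosedUnderHomeo K)
    (hRefl : IsReflective K) : HasEqualizers K := by
  intro X Y tX tY hKX hKY f g hf hg
  letI := tX; letI := tY
  haveI : T0Space X := hT0 _ _ hKX
  set E : Set X := {x | f x = g x} with hE
  letI tE : TopologicalSpace E := subTop tX E
  haveI hE0 : @T0Space E tE := Subtype.t0Space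
  obtain ⟨Ek, tk, μ, hKk, hμ, hfac⟩ := hRefl E tE hE0
  have he : @Continuous E X tE tX Subtype.val := continuous_subtype_val
  obtain ⟨h, ⟨hhc, hhe⟩, _⟩ := hfac X tX hKX Subtype.val he
  obtain ⟨w, _, hwuniq⟩ := hfac Y tY hKY (f ∘ Subtype.val) (hf.comp he)
  have e1 : f ∘ h = w := hwuniq _ ⟨hf.comp hhc,
    funext fun z => by
      show f (h (μ z)) = f z.val
      rw [show h (μ z) = z.val from congrFun hhe z]⟩
  have e2 : g ∘ h = w := hwuniq _ ⟨hg.comp hhc,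
    funext fun z => by
      show g (h (μ z)) = f z.val
      rw [show h (μ z) = z.val from congrFun hhe z]
      exact (z.property : f z.val = g z.val).symm⟩
  have hmem : ∀ y : Ek, h y ∈ E := fun y => congrFun (e1.trans e2.symm) y
  set h' : Ek → E := fun y => ⟨h y, hmem y⟩ with hh'def
  have hh'c : @Continuous Ek E tk tE h' := Continuous.subtype_mk hhc _
  have hh'μ : ∀ z, h' (μ z) = z := fun z => Subtype.ext (congrFun hhe z)
  obtain ⟨m, _, muniq⟩ := hfac Ek tk hKk μ hμ
  have u1 : μ ∘ h' = m := muniq _ ⟨hμ.comp hh'c, funext fun z => by simp [hh'μ z]⟩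
  have u2 : id = m := muniq _ ⟨continuous_id, rfl⟩
  have hμh' : ∀ y, μ (h' y) = y := fun y => congrFun (u1.trans u2.symm) y
  exact hHomeo Ek E tk tE hKk
    ⟨@Homeomorph.mk Ek E tk tE ⟨h', μ, hμh', hh'μ⟩ hh'c hμ⟩

lemma refl_bclosed (K : SpaceClass) (hT0 : AllT0 K) (hHomeo : ClosedUnderHomeo K)
    (hNotT1 : NotSubT1 K) (hRefl : IsReflective K) : BClosedHereditary K := by
  have hprod := refl_productive K hT0 hHomeo hRefl
  have heq := refl_equalizers K hT0 hHomeo hRefl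
  intro X tX A hKX hA
  letI := tX
  obtain ⟨Z, tZ, hKZ, hnT1⟩ := hNotT1
  letI := tZ
  have hb : ∃ b : Z, ¬ @IsClosed Z tZ {b} := by
    by_contra hall; push_neg at hall; exact hnT1 ⟨fun b => hall b⟩
  obtain ⟨b, hb⟩ := hb
  have hab : ∃ a, a ∈ closure {b} ∧ a ≠ b := by
    by_contra hno; push_neg at hno
    have : closure {b} = {b} :=
      Subset.antisymm (fun a ha => by by_contra hne; exact hne (hno a ha)) subset_closure
    exact hb (this ▸ isClosed_closure)
  obtain ⟨a, hab, hne⟩ := hab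
  have hAc : @IsOpen X (bTop X tX) Aᶜ := @IsClosed.isOpen_compl X (bTop X tX) A hA
  have hbasis := (@TopologicalSpace.IsTopologicalBasis.isOpen_iff X (bTop X tX) Aᶜ _
    (bTop_isBasis tX)).mp hAc
  have hwit : ∀ y : ↥Aᶜ, ∃ (U : Set X) (x : X), IsOpen U ∧ x ∈ U ∧
      (y : X) ∈ U ∩ closure {x} ∧ U ∩ closure {x} ⊆ Aᶜ := by
    rintro ⟨y, hy⟩
    obtain ⟨v, ⟨U, x, hU, hxU, rfl⟩, hyv, hsub⟩ := hbasis y hy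
    exact ⟨U, x, hU, hxU, hyv, hsub⟩
  choose U xx hU hxU hyUx hsub using hwit
  set F : X → (↥Aᶜ → Z) := fun z j => chi (U j) a b z with hF
  set G : X → (↥Aᶜ → Z) := fun z j => chi (U j \ closure {xx j}) a b z with hG
  letI tP : TopologicalSpace (↥Aᶜ → Z) := Pi.topologicalSpace
  have hKP : K (↥Aᶜ → Z) tP := hprod _ _ (fun _ => tZ) (fun _ => hKZ)
  have hFc : Continuous F := continuous_pi fun j => chi_continuous tX tZ hab (hU j)
  have hGc : Continuous G := continuous_pi fun j =>
    chi_continuous tX tZ hab ((hU j).sdiff isClosed_closure)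
  have hAE : A = {z | F z = G z} := by
    ext z; constructor
    · intro hz
      show F z = G z
      funext j
      have hnot : z ∉ U j ∩ closure {xx j} := fun hmem => (hsub j hmem) hz
      by_cases hzU : z ∈ U j
      · have hzc : z ∉ closure {xx j} := fun hc => hnot ⟨hzU, hc⟩
        show chi (U j) a b z = chi (U j \ closure {xx j}) a b z
        rw [chi, chi, if_pos hzU, if_pos (mem_diff_of_mem hzU hzc)]
      · show chi (U j) a b z = chi (U j \ closure {xx j}) a b z
        rw [chi, chi, if_neg hzU, if_neg (fun hc => hzU hc.1)]
    · intro hz; by_contra hzA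
      have h1 : F z ⟨z, hzA⟩ = G z ⟨z, hzA⟩ := congrFun hz ⟨z, hzA⟩
      obtain ⟨hzU, hzc⟩ := hyUx ⟨z, hzA⟩
      rw [hF, hG] at h1
      simp only [chi] at h1
      rw [if_pos hzU, if_neg (fun hc : z ∈ U _ \ closure {xx _} => hc.2 hzc)] at h1
      exact hne h1.symm
  have := heq X (↥Aᶜ → Z) tX tP hKX hKP F G hFc hGc
  rw [hAE]
  exact this

structure RIdx (K : SpaceClass) (X : Type) (tX : TopologicalSpace X) where
  S : Set (Set X)
  t : TopologicalSpace S
  hK : K S t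
  g : X → S
  hg : @Continuous X S tX t g

lemma backward (K : SpaceClass) (hT0 : AllT0 K) (hHomeo : ClosedUnderHomeo K)
    (hprod : Productive K) (hbc : BClosedHereditary K) : IsReflective K := by
  intro X tX hX0
  letI := tX
  letI tI : ∀ i : RIdx K X tX, TopologicalSpace i.S := fun i => i.t
  letI tP : TopologicalSpace (∀ i : RIdx K X tX, ↥i.S) := Pi.topologicalSpace
  have hKP : K _ tP := hprod _ _ _ (fun i => i.hK)
  set η : X → (∀ i : RIdx K X tX, ↥i.S) := fun x i => i.g x with hηdef
  have hηc : Continuous η := continuous_pi fun i => i.hg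
  set C : Set (∀ i : RIdx K X tX, ↥i.S) :=
    @closure _ (bTop _ tP) (Set.range η) with hCdef
  have hCcl : @IsClosed _ (bTop _ tP) C := @isClosed_closure _ (bTop _ tP) _
  letI tC : TopologicalSpace C := subTop tP C
  have hKC : K C tC := hbc _ tP C hKP hCcl
  have hηC : ∀ x, η x ∈ C := fun x => @subset_closure _ (bTop _ tP) (Set.range η) _ ⟨x, rfl⟩
  set μ : X → C := fun x => ⟨η x, hηC x⟩ with hμdef
  have hμc : @Continuous X C tX tC μ := Continuous.subtype_mk hηc _
  refine ⟨C, tC, μ, hKC, hμc, ?_⟩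
  intro Z tZ hKZ f hf
  letI := tZ
  haveI hZ0 : T0Space Z := hT0 _ _ hKZ
  -- the factorization through a space carried on a subset of Set X
  set D : Set Z := @closure Z (bTop Z tZ) (Set.range f) with hDdef
  letI tD : TopologicalSpace D := subTop tZ D
  have hKD : K D tD := hbc Z tZ D hKZ (@isClosed_closure _ (bTop Z tZ) _)
  set ι : D → Set X := fun p => {x | f x ∈ closure {p.val}} with hιdef
  have hι : Function.Injective ι := bClosure_inj tZ hZ0 f
  set S₀ : Set (Set X) := Set.range ι with hS₀def
  set e : D ≃ ↥S₀ := Equiv.ofInjective ι hι with hedef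
  letI t₀ : TopologicalSpace ↥S₀ := TopologicalSpace.coinduced e tD
  have hec : @Continuous D ↥S₀ tD t₀ e := continuous_coinduced_rng
  have hesymm : @Continuous ↥S₀ D t₀ tD e.symm := by
    refine ⟨fun V hV => ?_⟩
    rw [isOpen_coinduced]
    have : e ⁻¹' (e.symm ⁻¹' V) = V := by
      ext d; simp
    rwa [this]
  have hK₀ : K ↥S₀ t₀ := hHomeo D S₀ tD t₀ hKD
    ⟨@Homeomorph.mk D ↥S₀ tD t₀ e hec hesymm⟩
  have hfD : ∀ x, f x ∈ D := fun x => @subset_closure _ (bTop Z tZ) (Set.range f) _ ⟨x, rfl⟩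
  set g₀ : X → ↥S₀ := fun x => e ⟨f x, hfD x⟩ with hg₀def
  have hg₀c : @Continuous X ↥S₀ tX t₀ g₀ := hec.comp (Continuous.subtype_mk hf hfD)
  set i₀ : RIdx K X tX := ⟨S₀, t₀, hK₀, g₀, hg₀c⟩ with hi₀def
  set g : C → Z := fun p => (e.symm (p.val i₀)).val with hgdef
  have hgc : @Continuous C Z tC tZ g := by
    have h1 : @Continuous C _ tC tP Subtype.val := continuous_subtype_val
    have h2 : @Continuous _ ↥S₀ tP t₀ (fun p : ∀ i : RIdx K X tX, ↥i.S => p i₀) :=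
      continuous_apply i₀
    exact continuous_subtype_val.comp (hesymm.comp (h2.comp h1))
  have hgμ : g ∘ μ = f := by
    funext x
    show (e.symm (η x i₀)).val = f x
    have : η x i₀ = e ⟨f x, hfD x⟩ := rfl
    rw [this, Equiv.symm_apply_apply]
  -- uniqueness
  have key : ∀ (g₁ g₂ : C → Z), @Continuous C Z tC tZ g₁ → @Continuous C Z tC tZ g₂ →
      (∀ x, g₁ (μ x) = g₂ (μ x)) → ∀ p : C, g₁ p ∉ closure {g₂ p} → False := by
    intro g₁ g₂ h₁ h₂ hagree p hp
    have hV : @IsOpen Z tZ (closure {g₂ p})ᶜ := isClosed_closure.isOpen_compl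
    have hpre : @IsOpen C tC (g₁ ⁻¹' (closure {g₂ p})ᶜ) := hV.preimage h₁
    obtain ⟨W, hWopen, hWeq⟩ := isOpen_induced_iff.mp hpre
    have hpW : p.val ∈ W := by
      have : p ∈ g₁ ⁻¹' (closure {g₂ p})ᶜ := hp
      rw [← hWeq] at this; exact this
    have hB : @IsOpen _ (bTop _ tP) (W ∩ @closure _ tP {p.val}) :=
      bTop_basic_open tP hWopen hpW
    have hpB : p.val ∈ W ∩ @closure _ tP {p.val} := ⟨hpW, subset_closure rfl⟩
    obtain ⟨w, ⟨hwW, hwcl⟩, x, rfl⟩ :=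
      (@mem_closure_iff _ (bTop _ tP) p.val (Set.range η)).mp p.property _ hB hpB
    have hq1 : g₁ (μ x) ∉ closure {g₂ p} := by
      have hmem : μ x ∈ Subtype.val ⁻¹' W := hwW
      rw [hWeq] at hmem
      exact hmem
    have hspec : (p : ↥C) ⤳ μ x :=
      Topology.IsInducing.subtypeVal.specializes_iff.mp
        (specializes_iff_mem_closure.mpr hwcl)
    have : g₂ (μ x) ∈ closure {g₂ p} :=
      specializes_iff_mem_closure.mp (hspec.map h₂)
    rw [← hagree x] at this
    exact hq1 this
  refine ⟨g, ⟨hgc, hgμ⟩, ?_⟩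
  rintro g' ⟨hg'c, hg'μ⟩
  funext p
  by_contra hnep
  have hnotinsep : ¬ Inseparable (g' p) (g p) := fun hin => hnep hin.eq
  rcases not_and_or.mp (inseparable_iff_specializes_and.not.mp hnotinsep) with hc | hc
  · exact key g g' hgc hg'c
      (fun x => (congrFun hgμ x).trans (congrFun hg'μ x).symm) p
      (fun hm => hc (specializes_iff_mem_closure.mpr hm))
  · exact key g' g hg'c hgc
      (fun x => (congrFun hg'μ x).trans (congrFun hgμ x).symm) p
      (fun hm => hc (specializes_iff_mem_closure.mpr hm))

/-- a full subcategory of Top₀ closed under homeomorphisms containing a non-T₁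
space is reflective iff it is productive and b-closed-hereditary. -/
theorem statement8 (K : SpaceClass) (hT0 : AllT0 K) (hHomeo : ClosedUnderHomeo K)
    (hNotT1 : NotSubT1 K) :
    IsReflective K ↔ (Productive K ∧ BClosedHereditary K) := by
  constructor
  · intro hRefl
    exact ⟨refl_productive K hT0 hHomeo hRefl, refl_bclosed K hT0 hHomeo hNotT1 hRefl⟩
  · rintro ⟨hprod, hbc⟩
    exact backward K hT0 hHomeo hprod hbc
end

section
/- Let K be a full subcategory of Top₀ closed under homeomorphisms such that (Σ2)^M ∈ K for every set M. Then K has equalizers (i.e., for all X, Y ∈ K and all continuous f, g : X → Y, the subspace {x ∈ X : f(x) = g(x)} belongs to K) if and only if K is b-closed-hereditary. -/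
open TopologicalSpace

theorem bTop_isOpen_iff {X : Type} (t : TopologicalSpace X) (S : Set X) :
    @IsOpen X (bTop X t) S ↔ ∀ y ∈ S, ∃ U x, @IsOpen X t U ∧ x ∈ U ∧ y ∈ U ∧
      y ∈ @closure X t {x} ∧ U ∩ @closure X t {x} ⊆ S := by
  letI := t
  constructor
  · intro h
    change TopologicalSpace.GenerateOpen _ S at h
    induction h with
    | basic s hs =>
      obtain ⟨U, x, hU, hx, rfl⟩ := hs
      intro y hy
      exact ⟨U, x, hU, hx, hy.1, hy.2, subset_rfl⟩
    | univ =>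
      intro y _
      exact ⟨Set.univ, y, isOpen_univ, trivial, trivial, subset_closure rfl,
        fun z _ => trivial⟩
    | inter s t' _ _ ih1 ih2 =>
      intro y hy
      obtain ⟨U1, x1, hU1, _, hyU1, hycl1, hsub1⟩ := ih1 y hy.1
      obtain ⟨U2, x2, hU2, _, hyU2, hycl2, hsub2⟩ := ih2 y hy.2
      refine ⟨U1 ∩ U2, y, hU1.inter hU2, ⟨hyU1, hyU2⟩, ⟨hyU1, hyU2⟩,
        subset_closure rfl, ?_⟩
      intro z hz
      have hcl1 : closure ({y} : Set X) ⊆ closure {x1} :=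
        closure_minimal (Set.singleton_subset_iff.2 hycl1) isClosed_closure
      have hcl2 : closure ({y} : Set X) ⊆ closure {x2} :=
        closure_minimal (Set.singleton_subset_iff.2 hycl2) isClosed_closure
      exact ⟨hsub1 ⟨hz.1.1, hcl1 hz.2⟩, hsub2 ⟨hz.1.2, hcl2 hz.2⟩⟩
    | sUnion S0 _ ih =>
      intro y hy
      obtain ⟨s, hsS0, hys⟩ := hy
      obtain ⟨U, x, hU, hx, h1, h2, h3⟩ := ih s hsS0 y hys
      exact ⟨U, x, hU, hx, h1, h2, h3.trans (Set.subset_sUnion_of_mem hsS0)⟩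
  · intro h
    choose U x hU hx hyU hycl hsub using h
    have hS : S = ⋃ (y : S), (U y y.2 ∩ closure {x y y.2}) := by
      ext z
      constructor
      · intro hz
        exact Set.mem_iUnion.2 ⟨⟨z, hz⟩, hyU z hz, hycl z hz⟩
      · intro hz
        obtain ⟨y, hy⟩ := Set.mem_iUnion.1 hz
        exact hsub y y.2 hy
    rw [hS]
    exact @isOpen_iUnion X S (bTop X t) _ fun y =>
      TopologicalSpace.isOpen_generateFrom_of_mem ⟨U y y.2, x y y.2, hU y y.2, hx y y.2, rfl⟩
/-- if a full subcategory `K` of Top₀ closed under homeomorphisms contains all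
powers `(Σ2)^M` of the Sierpiński space, then `K` has equalizers iff it is
b-closed-hereditary. -/
theorem statement10 (K : SpaceClass) (hT0 : AllT0 K) (hHomeo : ClosedUnderHomeo K)
    (hPow : ∀ M : Type, K (M → Prop) (Pi.topologicalSpace (t₂ := fun _ => sierpinskiSpace))) :
    HasEqualizers K ↔ BClosedHereditary K := by
  constructor
  · -- equalizers → b-closed-hereditary
    intro hEq X tX A hKX hA
    letI := tX
    set M := {p : Set X × X // IsOpen p.1 ∧ p.2 ∈ p.1 ∧ p.1 ∩ closure {p.2} ⊆ Aᶜ} with hM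
    set F : X → M → Prop := fun z m => z ∈ m.1.1 with hFdef
    set G : X → M → Prop := fun z m => z ∈ m.1.1 ∧ z ∉ closure {m.1.2} with hGdef
    have hF : Continuous F := continuous_pi fun m => by
      rw [continuous_Prop]
      exact m.2.1
    have hG : Continuous G := continuous_pi fun m => by
      rw [continuous_Prop]
      exact m.2.1.inter isClosed_closure.isOpen_compl
    have hAc : @IsOpen X (bTop X tX) Aᶜ := hA.isOpen_compl
    have hset : {z | F z = G z} = A := by
      ext z
      simp only [Set.mem_setOf_eq]
      constructor
      · intro hz
        by_contra hzA
        obtain ⟨U, x, hU, hx, hzU, hzcl, hsub⟩ :=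
          (bTop_isOpen_iff tX Aᶜ).1 hAc z hzA
        have hm : (⟨(U, x), hU, hx, hsub⟩ : M) ∈ (Set.univ : Set M) := trivial
        have := congrFun hz ⟨(U, x), hU, hx, hsub⟩
        simp only [hFdef, hGdef] at this
        rw [eq_iff_iff] at this
        exact ((this.1 hzU).2) hzcl
      · intro hzA
        funext m
        apply propext
        constructor
        · intro hzU
          refine ⟨hzU, fun hzcl => ?_⟩
          exact m.2.2.2 ⟨hzU, hzcl⟩ hzA
        · exact fun h => h.1
    have := hEq X (M → Prop) tX _ hKX (hPow M) F G hF hG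
    rwa [hset] at this
  · -- b-closed-hereditary → equalizers
    intro hB X Y tX tY hKX hKY f g hf hg
    letI := tX; letI := tY
    haveI := hT0 Y tY hKY
    apply hB X tX _ hKX
    rw [← @isOpen_compl_iff X _ (bTop X tX), bTop_isOpen_iff]
    intro y hy
    have hne : f y ≠ g y := hy
    have hni : ¬ Inseparable (f y) (g y) := fun h => hne h.eq
    rw [inseparable_iff_forall_isOpen] at hni
    push_neg at hni
    obtain ⟨V, hV, hVne⟩ := hni
    rcases hVne with ⟨hfV, hgV⟩ | ⟨hfV, hgV⟩
    · refine ⟨f ⁻¹' V, y, hV.preimage hf, hfV, hfV, subset_closure rfl, ?_⟩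
      intro z hz hzE
      have h1 : g z ∈ closure ({g y} : Set Y) := by
        have := image_closure_subset_closure_image hg (s := ({y} : Set X))
        have h2 : g z ∈ g '' closure {y} := ⟨z, hz.2, rfl⟩
        simpa [Set.image_singleton] using this h2
      have h3 : g z ∈ V := by rw [← hzE]; exact hz.1
      obtain ⟨w, hw1, hw2⟩ := (mem_closure_iff.1 h1) V hV h3
      exact hgV (hw2 ▸ hw1)
    · refine ⟨g ⁻¹' V, y, hV.preimage hg, hgV, hgV, subset_closure rfl, ?_⟩
      intro z hz hzE
      have h1 : f z ∈ closure ({f y} : Set Y) := by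
        have := image_closure_subset_closure_image hf (s := ({y} : Set X))
        have h2 : f z ∈ f '' closure {y} := ⟨z, hz.2, rfl⟩
        simpa [Set.image_singleton] using this h2
      have h3 : f z ∈ V := by rw [hzE]; exact hz.1
      obtain ⟨w, hw1, hw2⟩ := (mem_closure_iff.1 h1) V hV h3
      exact hfV (hw2 ▸ hw1)
end

section
/- Let K be a full subcategory of Top₀ closed under homeomorphisms such that K ⊄ Top₁. Then K is reflective in Top₀ if and only if K is productive and K has equalizers. -/
open TopologicalSpace

/-- Core SAFT-style construction: the least `K`-subobject of `P` through which `e` factors. -/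
lemma core_subobj (K : SpaceClass) (hHomeo : ClosedUnderHomeo K)
    (hProd : Productive K) (hEq : HasEqualizers K)
    (P : Type) (tP : TopologicalSpace P) (hP : K P tP)
    (X : Type) (tX : TopologicalSpace X) (e : X → P) (he : @Continuous X P tX tP e) :
    ∃ (L : Type) (tL : TopologicalSpace L) (m : L → P) (μ : X → L),
      K L tL ∧ @Continuous L P tL tP m ∧ Function.Injective m ∧
      @Continuous X L tX tL μ ∧ m ∘ μ = e ∧
      ∀ (M : Type) (tM : TopologicalSpace M), K M tM →
        ∀ (mm : M → P) (f : X → M), @Continuous M P tM tP mm → Function.Injective mm →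
          @Continuous X M tX tM f → mm ∘ f = e →
          ∃ k : L → M, @Continuous L M tL tM k ∧ mm ∘ k = m := by
  classical
  letI := tP; letI := tX
  -- the set of subset-with-topology subobjects of P through which e factors
  let Good : (Σ A : Set P, TopologicalSpace A) → Prop := fun s =>
    K s.1 s.2 ∧ @Continuous s.1 P s.2 tP Subtype.val ∧
      ∃ f : X → s.1, @Continuous X s.1 tX s.2 f ∧ ∀ x, (f x : P) = e x
  let I := {s : Σ A : Set P, TopologicalSpace A // Good s}
  let T : I → Type := fun s => s.1.1
  letI τ : ∀ s : I, TopologicalSpace (T s) := fun s => s.1.2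
  let PP := ∀ s : I, T s
  letI tPP : TopologicalSpace PP := @Pi.topologicalSpace I T τ
  have hPi : K PP tPP := hProd I T τ (fun s => s.2.1)
  let Q := (I × I) → P
  have hQ : K Q (@Pi.topologicalSpace (I × I) (fun _ => P) (fun _ => tP)) := hProd (I × I) (fun _ => P) (fun _ => tP) (fun _ => hP)
  let F : PP → Q := fun w p => (w p.1 : P)
  let G : PP → Q := fun w p => (w p.2 : P)
  have hvalc : ∀ s : I, @Continuous (T s) P (τ s) tP Subtype.val := fun s => s.2.2.1
  have hF : Continuous F := continuous_pi fun p => (hvalc p.1).comp (continuous_apply p.1)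
  have hG : Continuous G := continuous_pi fun p => (hvalc p.2).comp (continuous_apply p.2)
  let L : Set PP := {w | F w = G w}
  have hL : K L (subTop tPP L) := hEq PP Q _ _ hPi hQ F G hF hG
  -- the trivial subobject : whole of P
  have good₀ : Good ⟨Set.univ, subTop tP Set.univ⟩ := by
    refine ⟨hHomeo P _ tP _ hP ⟨(Homeomorph.Set.univ P).symm⟩, continuous_subtype_val,
      fun x => ⟨e x, trivial⟩, he.subtype_mk _, fun x => rfl⟩
  let i₀ : I := ⟨⟨Set.univ, subTop tP Set.univ⟩, good₀⟩
  let m : L → P := fun w => (w.1 i₀ : P)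
  have keyeq : ∀ (w : L) (s : I), (w.1 s : P) = m w := by
    intro w s
    exact congrFun w.2 (s, i₀)
  have hmc : Continuous m :=
    (hvalc i₀).comp ((continuous_apply i₀).comp continuous_subtype_val)
  have hminj : Function.Injective m := by
    intro w w' h
    apply Subtype.ext
    funext s
    apply Subtype.ext
    rw [show ((w.1 s : P)) = m w from keyeq w s, show ((w'.1 s : P)) = m w' from keyeq w' s, h]
  -- the canonical factorization μ
  have hfs : ∀ s : I, ∃ f : X → T s, @Continuous X (T s) tX (τ s) f ∧ ∀ x, (f x : P) = e x :=
    fun s => s.2.2.2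
  choose fs hfsc hfsv using hfs
  let μ : X → L := fun x => ⟨fun s => fs s x, by
    funext p
    show (fs p.1 x : P) = (fs p.2 x : P)
    rw [hfsv p.1 x, hfsv p.2 x]⟩
  have hμc : Continuous μ := (continuous_pi fun s => hfsc s).subtype_mk _
  have hmμ : m ∘ μ = e := by
    funext x
    exact hfsv i₀ x
  refine ⟨L, _, m, μ, hL, hmc, hminj, hμc, hmμ, ?_⟩
  -- minimality
  intro M tM hM mm f hmmc hmminj hfc hcomm
  letI := tM
  let eqv : M ≃ Set.range mm := Equiv.ofInjective mm hmminj
  let σ : TopologicalSpace (Set.range mm) := TopologicalSpace.induced eqv.symm tM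
  have heqc : @Continuous M _ tM σ eqv := by
    apply continuous_induced_rng.mpr
    have h : (⇑eqv.symm ∘ ⇑eqv) = id := eqv.symm_comp_self
    rw [h]
    exact continuous_id
  have hsymc : @Continuous _ M σ tM eqv.symm := continuous_induced_dom
  have hval : ∀ a : Set.range mm, mm (eqv.symm a) = (a : P) := fun a =>
    Equiv.apply_ofInjective_symm hmminj a
  have goodM : Good ⟨Set.range mm, σ⟩ := by
    refine ⟨hHomeo M _ tM σ hM ⟨⟨eqv, heqc, hsymc⟩⟩, ?_, fun x => eqv (f x), heqc.comp hfc,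
      fun x => ?_⟩
    · have : (Subtype.val : Set.range mm → P) = mm ∘ eqv.symm := by
        funext a; exact (hval a).symm
      rw [this]
      exact hmmc.comp hsymc
    · show ((eqv (f x) : P)) = e x
      rw [Equiv.ofInjective_apply]
      exact congrFun hcomm x
  let s₁ : I := ⟨⟨Set.range mm, σ⟩, goodM⟩
  refine ⟨fun w => eqv.symm (w.1 s₁),
    hsymc.comp ((continuous_apply s₁).comp continuous_subtype_val), ?_⟩
  funext w
  show mm (eqv.symm (w.1 s₁)) = m w
  rw [hval (w.1 s₁)]
  exact keyeq w s₁

/-- continuity of the two-valued characteristic map into a space where `a ∈ cl {b}` -/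
lemma chi_cont {S : Type} [tS : TopologicalSpace S] {a b : S} (hcl : a ∈ closure ({b} : Set S))
    {Z : Type} [tZ : TopologicalSpace Z] {V : Set Z} [DecidablePred (· ∈ V)] (hV : IsOpen V) :
    Continuous fun z => if z ∈ V then b else a := by
  rw [continuous_def]
  intro W hW
  by_cases hbW : b ∈ W <;> by_cases haW : a ∈ W
  · have : (fun z => if z ∈ V then b else a) ⁻¹' W = Set.univ := by
      ext z; by_cases hz : z ∈ V <;> simp [hz, hbW, haW]
    rw [this]; exact isOpen_univ
  · have : (fun z => if z ∈ V then b else a) ⁻¹' W = V := by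
      ext z; by_cases hz : z ∈ V <;> simp [hz, hbW, haW]
    rw [this]; exact hV
  · exfalso
    obtain ⟨y, hy⟩ := mem_closure_iff.1 hcl W hW haW
    rw [hy.2] at hy
    exact hbW hy.1
  · have : (fun z => if z ∈ V then b else a) ⁻¹' W = ∅ := by
      ext z; by_cases hz : z ∈ V <;> simp [hz, hbW, haW]
    rw [this]; exact isOpen_empty

lemma backward_s11 (K : SpaceClass) (hT0 : AllT0 K) (hHomeo : ClosedUnderHomeo K)
    (hProd : Productive K) (hEq : HasEqualizers K)
    (S : Type) (tS : TopologicalSpace S) (hS : K S tS) (a b : S) (hab : a ≠ b)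
    (hcl : a ∈ @closure S tS ({b} : Set S)) : IsReflective K := by
  classical
  letI := tS
  intro X tX _
  letI := tX
  -- P : power of S indexed by continuous maps X → S, with evaluation e
  let C := {f : X → S // Continuous f}
  let P := C → S
  letI tP : TopologicalSpace P := Pi.topologicalSpace
  have hP : K P tP := hProd C (fun _ => S) (fun _ => tS) (fun _ => hS)
  let e : X → P := fun x f => f.1 x
  have he : Continuous e := continuous_pi fun f => f.2
  obtain ⟨L, tL, m, μ, hL, hmc, hminj, hμc, hmμ, hmin⟩ :=
    core_subobj K hHomeo hProd hEq P tP hP X tX e he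
  letI := tL
  refine ⟨L, tL, μ, hL, hμc, ?_⟩
  intro Z tZ hZ h hc
  letI := tZ
  haveI : T0Space Z := hT0 _ _ hZ
  -- power of S indexed by continuous maps Z → S, with evaluation eZ
  let CZ := {k : Z → S // Continuous k}
  let Q := CZ → S
  letI tQ : TopologicalSpace Q := Pi.topologicalSpace
  have hQ : K Q tQ := hProd CZ (fun _ => S) (fun _ => tS) (fun _ => hS)
  let eZ : Z → Q := fun z k => k.1 z
  have heZc : Continuous eZ := continuous_pi fun k => k.2
  have heZinj : Function.Injective eZ := by
    intro z z' hzz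
    refine Inseparable.eq (inseparable_iff_forall_isOpen.2 fun V hV => ?_)
    have := congrFun hzz ⟨fun w => if w ∈ V then b else a, chi_cont hcl hV⟩
    simp only [eZ] at this
    by_cases hz : z ∈ V <;> by_cases hz' : z' ∈ V <;> simp [hz, hz'] at this ⊢
    · exact (hab this.symm).elim
    · exact (hab this).elim
  -- the transpose map t : P → Q
  let t : P → Q := fun p k => p ⟨fun x => k.1 (h x), k.2.comp hc⟩
  have htc : Continuous t := continuous_pi fun k => continuous_apply _
  have hte : ∀ x, t (e x) = eZ (h x) := fun x => rfl
  -- D : pullback of eZ along t ∘ m, as K-subobject of P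
  let TT : Bool → Type := fun i => cond i L Z
  letI τT : ∀ i, TopologicalSpace (TT i) :=
    fun i => Bool.rec (motive := fun i => TopologicalSpace (TT i)) tZ tL i
  let W := ∀ i, TT i
  letI tW : TopologicalSpace W := Pi.topologicalSpace
  have hW : K W tW := hProd Bool TT τT (fun i => by cases i; exact hZ; exact hL)
  let FD : W → Q := fun w => t (m (w true))
  let GD : W → Q := fun w => eZ (w false)
  have hFDc : Continuous FD := htc.comp (hmc.comp (continuous_apply true))
  have hGDc : Continuous GD := heZc.comp (continuous_apply false)
  let D : Set W := {w | FD w = GD w}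
  have hD : K D (subTop tW D) := hEq W Q tW tQ hW hQ FD GD hFDc hGDc
  let mD : D → P := fun w => m (w.1 true)
  have hmDc : @Continuous D P (subTop tW D) tP mD :=
    hmc.comp ((continuous_apply true).comp continuous_subtype_val)
  have hDeq : ∀ w : D, t (m (w.1 true)) = eZ (w.1 false) := fun w => w.2
  have hmDinj : Function.Injective mD := by
    intro w w' hww
    have h1 : w.1 true = w'.1 true := hminj hww
    have h2 : w.1 false = w'.1 false := by
      apply heZinj
      rw [← hDeq w, ← hDeq w', h1]
    apply Subtype.ext
    funext i
    cases i
    · exact h2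
    · exact h1
  let pr : L → Z → W := fun ξ z i => Bool.rec (motive := fun i => TT i) z ξ i
  have hprD : ∀ x : X, FD (pr (μ x) (h x)) = GD (pr (μ x) (h x)) := by
    intro x
    show t (m (μ x)) = eZ (h x)
    rw [show m (μ x) = e x from congrFun hmμ x]
  let fD : X → D := fun x => ⟨pr (μ x) (h x), hprD x⟩
  have hfDc : @Continuous X D tX (subTop tW D) fD := by
    apply Continuous.subtype_mk
    apply continuous_pi
    intro i
    cases i
    · exact hc
    · exact hμc
  have hfDe : mD ∘ fD = e := by
    funext x
    exact congrFun hmμ x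
  obtain ⟨k, hkc, hkm⟩ := hmin D (subTop tW D) hD mD fD hmDc hmDinj hfDc hfDe
  let g : L → Z := fun ξ => (k ξ).1 false
  have hgc : Continuous g :=
    (continuous_apply false).comp (continuous_subtype_val.comp hkc)
  have hkμ : ∀ x, k (μ x) = fD x := by
    intro x
    apply hmDinj
    have h1 : mD (k (μ x)) = m (μ x) := congrFun hkm (μ x)
    have h2 : mD (fD x) = e x := congrFun hfDe x
    rw [h1, h2]
    exact congrFun hmμ x
  have hgμ : g ∘ μ = h := by
    funext x
    show (k (μ x)).1 false = h x
    rw [hkμ x]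
  refine ⟨g, ⟨hgc, hgμ⟩, ?_⟩
  -- uniqueness
  rintro g' ⟨hg'c, hg'μ⟩
  let E : Set L := {ξ | g' ξ = g ξ}
  have hEK : K E (subTop tL E) := hEq L Z tL tZ hL hZ g' g hg'c hgc
  let mE : E → P := fun ξ => m ξ.1
  have hmEc : @Continuous E P (subTop tL E) tP mE := hmc.comp continuous_subtype_val
  have hmEinj : Function.Injective mE := fun w w' hww => Subtype.ext (hminj hww)
  let fE : X → E := fun x => ⟨μ x, show g' (μ x) = g (μ x) from
    (congrFun hg'μ x).trans (congrFun hgμ x).symm⟩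
  have hfEc : @Continuous X E tX (subTop tL E) fE := hμc.subtype_mk _
  have hfEe : mE ∘ fE = e := by
    funext x
    exact congrFun hmμ x
  obtain ⟨k', hk'c, hk'm⟩ := hmin E (subTop tL E) hEK mE fE hmEc hmEinj hfEc hfEe
  funext ξ
  have : (k' ξ).1 = ξ := hminj (congrFun hk'm ξ)
  have hmem : ξ ∈ E := this ▸ (k' ξ).2
  exact hmem

lemma fwd_prod (K : SpaceClass) (hT0 : AllT0 K) (hHomeo : ClosedUnderHomeo K)
    (hR : IsReflective K) : Productive K := by
  intro I X t hKi
  letI := fun i => t i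
  haveI : ∀ i, T0Space (X i) := fun i => hT0 _ _ (hKi i)
  haveI : T0Space (∀ i, X i) := inferInstance
  obtain ⟨Xk, tk, μ, hKk, hμc, hU⟩ := hR (∀ i, X i) _ inferInstance
  letI := tk
  have hproj : ∀ i, ∃ g : Xk → X i, (Continuous g ∧ g ∘ μ = fun p => p i) := by
    intro i
    obtain ⟨g, hg, -⟩ := hU (X i) (t i) (hKi i) (fun p => p i) (continuous_apply i)
    exact ⟨g, hg⟩
  choose g hgc hge using hproj
  set G : Xk → ∀ i, X i := fun ξ i => g i ξ with hG
  have hGc : Continuous G := continuous_pi fun i => hgc i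
  have hGμ : G ∘ μ = id := by
    funext p; funext i
    exact congrFun (hge i) p
  have hμG : μ ∘ G = id := by
    obtain ⟨u, hu, huniq⟩ := hU Xk tk hKk μ hμc
    have h1 : μ ∘ G = u := huniq (μ ∘ G) ⟨hμc.comp hGc, by
      rw [Function.comp_assoc, hGμ]; rfl⟩
    have h2 : (id : Xk → Xk) = u := huniq id ⟨continuous_id, by rfl⟩
    rw [h1, h2]
  have homeo : Xk ≃ₜ (∀ i, X i) :=
    { toFun := G, invFun := μ,
      left_inv := fun ξ => congrFun hμG ξ,
      right_inv := fun p => congrFun hGμ p,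
      continuous_toFun := hGc, continuous_invFun := hμc }
  exact hHomeo Xk (∀ i, X i) tk _ hKk ⟨homeo⟩

lemma fwd_eq (K : SpaceClass) (hT0 : AllT0 K) (hHomeo : ClosedUnderHomeo K)
    (hR : IsReflective K) : HasEqualizers K := by
  intro X Y tX tY hX hY f g hf hg
  letI := tX; letI := tY
  haveI : T0Space X := hT0 _ _ hX
  set E : Set X := {x | f x = g x} with hE
  haveI : T0Space E := inferInstance
  have hsub : subTop tX E = instTopologicalSpaceSubtype := rfl
  obtain ⟨Ek, tk, μ, hKk, hμc, hU⟩ := hR E instTopologicalSpaceSubtype inferInstance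
  letI := tk
  obtain ⟨j, ⟨hjc, hjμ⟩, -⟩ := hU X tX hX Subtype.val continuous_subtype_val
  have hfg : ∀ ξ : Ek, f (j ξ) = g (j ξ) := by
    obtain ⟨u, hu, huniq⟩ := hU Y tY hY (fun x => f x.1) (hf.comp continuous_subtype_val)
    have h1 : f ∘ j = u := huniq (f ∘ j) ⟨hf.comp hjc, by
      rw [Function.comp_assoc, hjμ]; rfl⟩
    have h2 : g ∘ j = u := huniq (g ∘ j) ⟨hg.comp hjc, by
      rw [Function.comp_assoc, hjμ]; funext x; exact (x.2 : f x.1 = g x.1).symm⟩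
    intro ξ
    have := congrFun (h1.trans h2.symm) ξ
    exact this
  set j' : Ek → E := fun ξ => ⟨j ξ, hfg ξ⟩ with hj'
  have hj'c : Continuous j' := hjc.subtype_mk _
  have hj'μ : j' ∘ μ = id := by
    funext x; apply Subtype.ext; exact congrFun hjμ x
  have hμj' : μ ∘ j' = id := by
    obtain ⟨u, hu, huniq⟩ := hU Ek tk hKk μ hμc
    have h1 : μ ∘ j' = u := huniq (μ ∘ j') ⟨hμc.comp hj'c, by
      rw [Function.comp_assoc, hj'μ]; rfl⟩
    have h2 : (id : Ek → Ek) = u := huniq id ⟨continuous_id, rfl⟩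
    rw [h1, h2]
  have homeo : Ek ≃ₜ E :=
    { toFun := j', invFun := μ,
      left_inv := fun ξ => congrFun hμj' ξ,
      right_inv := fun x => congrFun hj'μ x,
      continuous_toFun := hj'c, continuous_invFun := hμc }
  rw [hsub]
  exact hHomeo Ek E tk _ hKk ⟨homeo⟩


/-- a full subcategory of Top₀ closed under homeomorphisms containing a non-T₁
space is reflective iff it is productive and has equalizers. -/
theorem statement11 (K : SpaceClass) (hT0 : AllT0 K) (hHomeo : ClosedUnderHomeo K)
    (hNotT1 : NotSubT1 K) :
    IsReflective K ↔ (Productive K ∧ HasEqualizers K) := by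
  constructor
  · intro hR
    exact ⟨fwd_prod K hT0 hHomeo hR, fwd_eq K hT0 hHomeo hR⟩
  · rintro ⟨hProd, hEq⟩
    obtain ⟨S, tS, hS, hnT1⟩ := hNotT1
    letI := tS
    have hb : ∃ b : S, ¬ IsClosed ({b} : Set S) := by
      by_contra hall
      push_neg at hall
      exact hnT1 ⟨hall⟩
    obtain ⟨b, hb⟩ := hb
    have ha : ∃ a : S, a ∈ closure ({b} : Set S) ∧ a ≠ b := by
      by_contra hall
      push_neg at hall
      have : closure ({b} : Set S) = {b} := by
        apply Set.Subset.antisymm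
        · intro a ha
          exact hall a ha
        · exact subset_closure
      exact hb (this ▸ isClosed_closure)
    obtain ⟨a, hcl, hab⟩ := ha
    exact backward_s11 K hT0 hHomeo hProd hEq S tS hS a b hab hcl
end
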